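/- arXiv:1808.06050 — 5 statements merged into one kernel-verified Lean document; each statement's English description precedes it below -/
import Mathlib

section
/- Let r>0, n∈ℕ and 𝒞 = C([-r,0],ℝⁿ). Fix γ ∈ (0,1], υ > 0, C > 0, θ ∈ (0,1), and a function p : (0,∞) → [0,1] with p(s)/s^γ → 0 as s → 0. Suppose that for a family {μ^x : x ∈ 𝒞} of probability measures on 𝒞 there are families of 𝒞-valued random elements {ξ^{x,y} : x,y ∈ 𝒞} and {η^{x,y} : x,y ∈ 𝒞} (each pair ξ^{x,y}, η^{x,y} defined on a common probability space) such that: (i) Law(ξ^{x,y}) = μ^x for all x,y, and d_TV(Law(η^{x,y}), μ^y) ≤ C‖x−y‖^γ whenever ‖x−y‖ ≤ υ; (ii) P(‖ξ^{x,y} − η^{x,y}‖ > θ‖x−y‖) ≤ p(‖x−y‖) whenever ‖x−y‖ ≤ υ. Then for every θ₁ ∈ (θ^γ, 1) there exists N₀ (depending only on γ, υ, C, θ, θ₁ and p) such that for all N ≥ N₀ and all x, y ∈ 𝒞 with d_{N,γ}(x,y) < 1, the coupling distance satisfies d_{N,γ}(μ^x, μ^y) ≤ θ₁ · d_{N,γ}(x,y).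 -/
open MeasureTheory Set
open ENNReal

/-- The space `𝒞 = C([-r,0], ℝⁿ)` with the supremum norm. -/
abbrev PathSpace (r : ℝ) (n : ℕ) : Type :=
  C(Set.Icc (-r) (0:ℝ), EuclideanSpace ℝ (Fin n))

noncomputable instance (r : ℝ) (n : ℕ) : MeasurableSpace (PathSpace r n) := borel _

instance (r : ℝ) (n : ℕ) : BorelSpace (PathSpace r n) := ⟨rfl⟩

/-- The metric `d_{N,γ}(x,y) = min(N‖x−y‖^γ, 1)`. -/
noncomputable def dNg {E : Type*} [NormedAddCommGroup E] (N γ : ℝ) (x y : E) : ℝ :=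
  min (N * ‖x - y‖ ^ γ) 1

/-- The total variation distance `d_TV(μ,ν) = sup_A |μ(A) − ν(A)|`. -/
noncomputable def tvDist {α : Type*} [MeasurableSpace α] (μ ν : Measure α) : ℝ :=
  ⨆ A : {s : Set α // MeasurableSet s}, |(μ A).toReal - (ν A).toReal|

/-- The coupling (Kantorovich) distance associated to a bounded metric `d`:
the infimum of `∫ d(x,y) λ(dx,dy)` over all couplings `λ` of `μ` and `ν`. -/
noncomputable def couplingDist {α : Type*} [MeasurableSpace α]
    (d : α → α → ℝ) (μ ν : Measure α) : ℝ :=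
  ⨅ π : {π : Measure (α × α) // π.map Prod.fst = μ ∧ π.map Prod.snd = ν},
    ∫ z, d z.1 z.2 ∂(π : Measure (α × α))

lemma couplingDist_le_integral {α : Type*} [MeasurableSpace α] (d : α → α → ℝ)
    (hd : ∀ a b, 0 ≤ d a b) {μ ν : Measure α} (π : Measure (α × α))
    (h1 : π.map Prod.fst = μ) (h2 : π.map Prod.snd = ν) :
    couplingDist d μ ν ≤ ∫ z, d z.1 z.2 ∂π := by
  have hbdd : BddBelow (Set.range fun π' : {π : Measure (α × α) //
      π.map Prod.fst = μ ∧ π.map Prod.snd = ν} =>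
      ∫ z, d z.1 z.2 ∂(π' : Measure (α × α))) := by
    refine ⟨0, ?_⟩
    rintro v ⟨π', rfl⟩
    exact integral_nonneg fun z => hd _ _
  exact ciInf_le hbdd ⟨π, h1, h2⟩

lemma map_fst_withDensity {α β : Type*} [MeasurableSpace α] [MeasurableSpace β]
    (lam : Measure (α × β)) (g : α → ℝ≥0∞) (hg : Measurable g) :
    (lam.withDensity (fun z => g z.1)).map Prod.fst = (lam.map Prod.fst).withDensity g := by
  ext t ht
  rw [Measure.map_apply measurable_fst ht, withDensity_apply _ (measurable_fst ht),
    withDensity_apply _ ht, setLIntegral_map ht hg measurable_fst]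

set_option maxHeartbeats 1000000
set_option synthInstance.maxHeartbeats 400000

/-- Generalized coupling contraction proposition: if for each pair `x,y` there is a
generalized coupling `(ξ^{x,y}, η^{x,y})` with `Law(ξ^{x,y}) = μ^x`, whose second component
is `C‖x−y‖^γ`-close in total variation to `μ^y`, and whose components are `θ`-contracted with
probability at least `1 − p(‖x−y‖)`, then for every `θ₁ ∈ (θ^γ, 1)` there is `N₀` such that
for all `N ≥ N₀` the coupling distance `d_{N,γ}` contracts by the factor `θ₁` on the set
`{(x,y) : d_{N,γ}(x,y) < 1}`. -/
theorem generalized_coupling_contraction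
    (r : ℝ) (hr : 0 < r) (n : ℕ)
    (γ υ C θ : ℝ) (hγ : γ ∈ Set.Ioc (0:ℝ) 1) (hυ : 0 < υ) (hC : 0 < C)
    (hθ : θ ∈ Set.Ioo (0:ℝ) 1)
    (p : ℝ → ℝ) (hp01 : ∀ s : ℝ, 0 < s → p s ∈ Set.Icc (0:ℝ) 1)
    (hplim : Filter.Tendsto (fun s => p s / s ^ γ) (nhdsWithin 0 (Set.Ioi 0)) (nhds 0))
    {Ω : Type} [MeasurableSpace Ω]
    (P : PathSpace r n → PathSpace r n → Measure Ω)
    (hP : ∀ x y, IsProbabilityMeasure (P x y))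
    (μ : PathSpace r n → Measure (PathSpace r n))
    (hμ : ∀ x, IsProbabilityMeasure (μ x))
    (ξ η : PathSpace r n → PathSpace r n → Ω → PathSpace r n)
    (hξm : ∀ x y, Measurable (ξ x y)) (hηm : ∀ x y, Measurable (η x y))
    (hlaw : ∀ x y, (P x y).map (ξ x y) = μ x)
    (htv : ∀ x y : PathSpace r n, ‖x - y‖ ≤ υ →
      tvDist ((P x y).map (η x y)) (μ y) ≤ C * ‖x - y‖ ^ γ)
    (hclose : ∀ x y : PathSpace r n, ‖x - y‖ ≤ υ →
      ((P x y) {ω | θ * ‖x - y‖ < ‖ξ x y ω - η x y ω‖}).toReal ≤ p ‖x - y‖) :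
    ∀ θ₁ ∈ Set.Ioo (θ ^ γ) 1, ∃ N₀ : ℝ, ∀ N ≥ N₀, ∀ x y : PathSpace r n,
      dNg N γ x y < 1 → couplingDist (dNg N γ) (μ x) (μ y) ≤ θ₁ * dNg N γ x y := by
  intro θ₁ hθ₁
  set ε₁ := θ₁ - θ ^ γ with hε₁_def
  have hε₁ : 0 < ε₁ := sub_pos.2 hθ₁.1
  obtain ⟨δ, hδ0, hδ⟩ := Metric.tendsto_nhdsWithin_nhds.mp hplim (ε₁ / 2) (by positivity)
  set m₀ := min δ υ with hm₀_def
  have hm₀ : 0 < m₀ := lt_min hδ0 hυ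
  refine ⟨max (max 1 (2 * C / ε₁)) ((m₀ ^ γ)⁻¹), fun N hN x y hxy => ?_⟩
  have hN1 : (1:ℝ) ≤ N := le_trans (le_trans (le_max_left _ _) (le_max_left _ _)) hN
  have hN0 : 0 < N := lt_of_lt_of_le one_pos hN1
  have hNC : 2 * C / ε₁ ≤ N := le_trans (le_trans (le_max_right _ _) (le_max_left _ _)) hN
  have hNm : (m₀ ^ γ)⁻¹ ≤ N := le_trans (le_max_right _ _) hN
  set sn := ‖x - y‖ with hsn_def
  have hsn0 : 0 ≤ sn := norm_nonneg _
  have hlt : N * sn ^ γ < 1 := by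
    rcases min_lt_iff.mp hxy with h | h
    · exact h
    · exact absurd h (lt_irrefl 1)
  have hdx : dNg N γ x y = N * sn ^ γ := min_eq_left hlt.le
  have hd : ∀ a b : PathSpace r n, 0 ≤ dNg N γ a b := fun a b =>
    le_min (mul_nonneg hN0.le (Real.rpow_nonneg (norm_nonneg _) _)) one_pos.le
  haveI := hμ x; haveI := hμ y; haveI := hP x y
  by_cases hxy0 : x = y
  · -- diagonal case
    subst hxy0
    have h0 : dNg N γ x x = 0 := by
      simp [dNg, Real.zero_rpow hγ.1.ne']
    set π := (μ x).map (fun a => (a, a)) with hπ_def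
    have hdm : Measurable fun a : PathSpace r n => (a, a) :=
      measurable_id.prodMk measurable_id
    have hπ1 : π.map Prod.fst = μ x := by
      rw [hπ_def, Measure.map_map measurable_fst hdm]
      exact Measure.map_id
    have hπ2 : π.map Prod.snd = μ x := by
      rw [hπ_def, Measure.map_map measurable_snd hdm]
      exact Measure.map_id
    have hle := couplingDist_le_integral (dNg N γ) hd π hπ1 hπ2
    have hfc : Continuous (fun z : PathSpace r n × PathSpace r n => dNg N γ z.1 z.2) := by
      unfold dNg
      exact ((continuous_const.mul ((continuous_fst.sub continuous_snd).norm.rpow_const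
        (fun _ => Or.inr hγ.1.le))).min continuous_const)
    have heq : ∫ z, dNg N γ z.1 z.2 ∂π = 0 := by
      rw [hπ_def, integral_map hdm.aemeasurable hfc.aestronglyMeasurable]
      simp [dNg, Real.zero_rpow hγ.1.ne']
    rw [h0, mul_zero]
    rw [heq] at hle
    exact hle
  · have hsn : 0 < sn := by
      rw [hsn_def]
      exact norm_sub_pos_iff.mpr hxy0
    have hsγpos : 0 < sn ^ γ := Real.rpow_pos_of_pos hsn γ
    have hmp : 0 < m₀ ^ γ := Real.rpow_pos_of_pos hm₀ γ
    have hsm : sn ^ γ < m₀ ^ γ := by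
      have h1 : (m₀ ^ γ)⁻¹ * sn ^ γ ≤ N * sn ^ γ :=
        mul_le_mul_of_nonneg_right hNm hsγpos.le
      have h2 : (m₀ ^ γ)⁻¹ * sn ^ γ < 1 := lt_of_le_of_lt h1 hlt
      calc sn ^ γ = m₀ ^ γ * ((m₀ ^ γ)⁻¹ * sn ^ γ) := by field_simp
      _ < m₀ ^ γ * 1 := by exact mul_lt_mul_of_pos_left h2 hmp
      _ = m₀ ^ γ := mul_one _
    have hsm' : sn < m₀ := by
      by_contra h
      push_neg at h
      exact absurd (Real.rpow_le_rpow hm₀.le h hγ.1.le) (not_le.2 hsm)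
    have hsυ : sn ≤ υ := le_of_lt (hsm'.trans_le (min_le_right δ υ))
    have hsδ : sn < δ := hsm'.trans_le (min_le_left δ υ)
    have hp_bound : p sn ≤ ε₁ / 2 * sn ^ γ := by
      have h := hδ (mem_Ioi.2 hsn) (by rwa [Real.dist_eq, sub_zero, abs_of_pos hsn])
      rw [Real.dist_eq, sub_zero] at h
      have h2 := (abs_lt.mp h).2
      rw [div_lt_iff₀ hsγpos] at h2
      linarith
    -- measure construction
    set ν := (P x y).map (η x y) with hν_def
    haveI : IsProbabilityMeasure ν := Measure.isProbabilityMeasure_map (hηm x y).aemeasurable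
    have hpair : Measurable fun ω => (η x y ω, ξ x y ω) := (hηm x y).prodMk (hξm x y)
    set lam := (P x y).map (fun ω => (η x y ω, ξ x y ω)) with hlam_def
    haveI : IsProbabilityMeasure lam := Measure.isProbabilityMeasure_map hpair.aemeasurable
    have hlam_fst : lam.map Prod.fst = ν := by
      rw [hlam_def, Measure.map_map measurable_fst hpair]
      rfl
    have hlam_snd : lam.map Prod.snd = μ x := by
      rw [hlam_def, Measure.map_map measurable_snd hpair]
      exact hlaw x y
    obtain ⟨E, hEm, hE1, hE2⟩ := hahn_decomposition (μ := μ y) (ν := ν)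
    set ρ := ν.restrict E + (μ y).restrict Eᶜ with hρ_def
    have hρν : ρ ≤ ν := by
      rw [Measure.le_iff]
      intro t ht
      rw [hρ_def, Measure.add_apply, Measure.restrict_apply ht, Measure.restrict_apply ht]
      have h1 : (μ y) (t ∩ Eᶜ) ≤ ν (t ∩ Eᶜ) :=
        hE2 _ (ht.inter hEm.compl) inter_subset_right
      calc ν (t ∩ E) + μ y (t ∩ Eᶜ) ≤ ν (t ∩ E) + ν (t ∩ Eᶜ) := add_le_add_right h1 _
      _ = ν (t ∩ E) + ν (t \ E) := by rw [diff_eq]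
      _ = ν t := measure_inter_add_diff t hEm
    have hρμy : ρ ≤ μ y := by
      rw [Measure.le_iff]
      intro t ht
      rw [hρ_def, Measure.add_apply, Measure.restrict_apply ht, Measure.restrict_apply ht]
      have h1 : ν (t ∩ E) ≤ μ y (t ∩ E) := hE1 _ (ht.inter hEm) inter_subset_right
      calc ν (t ∩ E) + μ y (t ∩ Eᶜ) ≤ μ y (t ∩ E) + μ y (t ∩ Eᶜ) := add_le_add_left h1 _
      _ = μ y (t ∩ E) + μ y (t \ E) := by rw [diff_eq]
      _ = μ y t := measure_inter_add_diff t hEm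
    haveI : IsFiniteMeasure ρ := isFiniteMeasure_of_le ν hρν
    have hg : Measurable (ρ.rnDeriv ν) := Measure.measurable_rnDeriv ρ ν
    set g := ρ.rnDeriv ν with hg_def
    have hgρ : ν.withDensity g = ρ :=
      Measure.withDensity_rnDeriv_eq ρ ν (Measure.absolutelyContinuous_of_le hρν)
    set lamg := lam.withDensity (fun z => g z.1) with hlamg_def
    have hlamg_fst : lamg.map Prod.fst = ρ := by
      rw [hlamg_def, map_fst_withDensity _ _ hg, hlam_fst, hgρ]
    have hg_le_one : ∀ᵐ z ∂lam, g z.1 ≤ 1 := by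
      have h1 : g ≤ᵐ[ν] 1 := Measure.rnDeriv_le_one_of_le hρν
      rw [← hlam_fst] at h1
      have h2 := ae_of_ae_map (measurable_fst (α := PathSpace r n)
        (β := PathSpace r n)).aemeasurable h1
      filter_upwards [h2] with z hz using hz
    have hlamg_le : lamg ≤ lam := by
      rw [Measure.le_iff]
      intro t ht
      rw [hlamg_def, withDensity_apply _ ht]
      calc ∫⁻ z in t, g z.1 ∂lam ≤ ∫⁻ z in t, 1 ∂lam :=
        lintegral_mono_ae (ae_restrict_of_ae hg_le_one)
      _ = lam t := by rw [setLIntegral_one]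
    set χ := lamg.map Prod.snd with hχ_def
    have hχ_le : χ ≤ μ x := by
      rw [hχ_def, ← hlam_snd]
      exact Measure.map_mono hlamg_le measurable_snd
    haveI : IsFiniteMeasure lamg := isFiniteMeasure_of_le lam hlamg_le
    haveI : IsFiniteMeasure χ := isFiniteMeasure_of_le (μ x) hχ_le
    set μ' := μ y - ρ with hμ'_def
    set τ := μ x - χ with hτ_def
    haveI : IsFiniteMeasure μ' := isFiniteMeasure_of_le (μ y) Measure.sub_le
    haveI : IsFiniteMeasure τ := isFiniteMeasure_of_le (μ x) Measure.sub_le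
    have hρμ'_add : ρ + μ' = μ y := by
      rw [hμ'_def, add_comm]
      exact Measure.sub_add_cancel_of_le hρμy
    have hχτ_add : χ + τ = μ x := by
      rw [hτ_def, add_comm]
      exact Measure.sub_add_cancel_of_le hχ_le
    have hlamg_univ : lamg univ = ρ univ := by
      rw [← hlamg_fst, Measure.map_apply measurable_fst MeasurableSet.univ, preimage_univ]
    have hχ_univ : χ univ = ρ univ := by
      rw [hχ_def, Measure.map_apply measurable_snd MeasurableSet.univ, preimage_univ,
        hlamg_univ]
    set m := μ' univ with hm_def
    have hm_ne_top : m ≠ ∞ := measure_ne_top _ _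
    have hτ_univ : τ univ = m := by
      have h1 : χ univ + τ univ = μ x univ := by rw [← Measure.add_apply, hχτ_add]
      have h2 : ρ univ + m = μ y univ := by rw [hm_def, ← Measure.add_apply, hρμ'_add]
      have hx1 : (μ x) univ = 1 := measure_univ
      have hy1 : (μ y) univ = 1 := measure_univ
      rw [hχ_univ, hx1] at h1
      rw [hy1] at h2
      exact (ENNReal.add_right_inj (measure_ne_top ρ univ)).mp (h1.trans h2.symm)
    have hμ'_zero : m = 0 → μ' = 0 := fun h => Measure.measure_univ_eq_zero.mp (hm_def ▸ h)
    set σc := m⁻¹ • (μ'.prod τ) with hσc_def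
    have hσc_fst : σc.map Prod.fst = μ' := by
      rw [hσc_def, Measure.map_smul, Measure.map_fst_prod, hτ_univ]
      by_cases h0 : m = 0
      · simp [h0, hμ'_zero h0]
      · rw [smul_smul, ENNReal.inv_mul_cancel h0 hm_ne_top, one_smul]
    have hτ_zero : m = 0 → τ = 0 := fun h =>
      Measure.measure_univ_eq_zero.mp (hτ_univ.trans h)
    have hσc_snd : σc.map Prod.snd = τ := by
      rw [hσc_def, Measure.map_smul, Measure.map_snd_prod, ← hm_def]
      by_cases h0 : m = 0
      · simp [h0, hτ_zero h0]
      · rw [smul_smul, ENNReal.inv_mul_cancel h0 hm_ne_top, one_smul]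
    set σ := lamg + σc with hσ_def
    set π := σ.map Prod.swap with hπ_def
    have hπ_fst : π.map Prod.fst = μ x := by
      rw [hπ_def, Measure.map_map measurable_fst measurable_swap]
      have hcs : (Prod.fst ∘ Prod.swap : PathSpace r n × PathSpace r n → PathSpace r n)
          = Prod.snd := rfl
      rw [hcs, hσ_def, Measure.map_add _ _ measurable_snd, hσc_snd, ← hχ_def, hχτ_add]
    have hπ_snd : π.map Prod.snd = μ y := by
      rw [hπ_def, Measure.map_map measurable_snd measurable_swap]
      have hcs : (Prod.snd ∘ Prod.swap : PathSpace r n × PathSpace r n → PathSpace r n)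
          = Prod.fst := rfl
      rw [hcs, hσ_def, Measure.map_add _ _ measurable_fst, hσc_fst, hlamg_fst, hρμ'_add]
    -- integrand
    set f : PathSpace r n × PathSpace r n → ℝ := fun z => dNg N γ z.1 z.2 with hf_def
    have hfc : Continuous f := by
      rw [hf_def]
      unfold dNg
      exact ((continuous_const.mul ((continuous_fst.sub continuous_snd).norm.rpow_const
        (fun _ => Or.inr hγ.1.le))).min continuous_const)
    have hf0 : ∀ z, 0 ≤ f z := fun z => hd _ _
    have hf1 : ∀ z, f z ≤ 1 := fun z => min_le_right _ _
    have hfint : ∀ (κ : Measure (PathSpace r n × PathSpace r n)), IsFiniteMeasure κ →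
        Integrable f κ := by
      intro κ hκ
      refine Integrable.mono' (integrable_const 1) hfc.aestronglyMeasurable ?_
      exact Filter.Eventually.of_forall fun z => by
        rw [Real.norm_eq_abs, abs_of_nonneg (hf0 z)]; exact hf1 z
    have hσc_univ : σc univ = m := by
      have h := congrArg (fun κ : Measure (PathSpace r n) => κ univ) hσc_fst
      simpa [Measure.map_apply measurable_fst MeasurableSet.univ] using h
    haveI : IsFiniteMeasure σc := ⟨by rw [hσc_univ]; exact hm_ne_top.lt_top⟩
    haveI : IsFiniteMeasure σ := by rw [hσ_def]; infer_instance
    -- bound the integral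
    have key : couplingDist (dNg N γ) (μ x) (μ y) ≤ ∫ z, f z ∂σ := by
      have h1 := couplingDist_le_integral (dNg N γ) hd π hπ_fst hπ_snd
      have h2 : ∫ z, dNg N γ z.1 z.2 ∂π = ∫ z, dNg N γ z.2 z.1 ∂σ := by
        rw [hπ_def, integral_map measurable_swap.aemeasurable hfc.aestronglyMeasurable]
        rfl
      have h3 : (fun z : PathSpace r n × PathSpace r n => dNg N γ z.2 z.1) = f := by
        funext z
        rw [hf_def]
        simp only [dNg]
        rw [norm_sub_rev]
      rw [h2, h3] at h1
      exact h1
    have hσ_split : ∫ z, f z ∂σ = (∫ z, f z ∂lamg) + ∫ z, f z ∂σc := by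
      rw [hσ_def]
      exact integral_add_measure (hfint _ inferInstance) (hfint _ inferInstance)
    have hgood : ∫ z, f z ∂lamg ≤ ∫ z, f z ∂lam :=
      integral_mono_measure hlamg_le (Filter.Eventually.of_forall hf0)
        (hfint _ inferInstance)
    have hlam_int : ∫ z, f z ∂lam = ∫ ω, f (η x y ω, ξ x y ω) ∂(P x y) := by
      rw [hlam_def, integral_map hpair.aemeasurable hfc.aestronglyMeasurable]
    set A := {ω | ‖ξ x y ω - η x y ω‖ ≤ θ * sn} with hA_def
    have hAm : MeasurableSet A :=
      measurableSet_le ((hξm x y).sub (hηm x y)).norm measurable_const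
    have hAc : Aᶜ = {ω | θ * sn < ‖ξ x y ω - η x y ω‖} := by
      ext ω; simp [hA_def, not_le]
    have hint_comp : Integrable (fun ω => f (η x y ω, ξ x y ω)) (P x y) := by
      have := (integrable_map_measure hfc.aestronglyMeasurable hpair.aemeasurable).mp
        (hlam_def ▸ hfint lam inferInstance)
      exact this
    have hsplit2 : ∫ ω, f (η x y ω, ξ x y ω) ∂(P x y) =
        (∫ ω in A, f (η x y ω, ξ x y ω) ∂(P x y)) +
        ∫ ω in Aᶜ, f (η x y ω, ξ x y ω) ∂(P x y) :=
      (integral_add_compl hAm hint_comp).symm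
    have htoReal_le_one : ∀ (t : Set Ω), ((P x y) t).toReal ≤ 1 := by
      intro t
      have h1 : (P x y) t ≤ 1 := prob_le_one
      calc ((P x y) t).toReal ≤ (1 : ℝ≥0∞).toReal := ENNReal.toReal_mono one_ne_top h1
      _ = 1 := ENNReal.toReal_one
    have hIA : ∫ ω in A, f (η x y ω, ξ x y ω) ∂(P x y) ≤ N * (θ * sn) ^ γ := by
      have hCnn : 0 ≤ N * (θ * sn) ^ γ :=
        mul_nonneg hN0.le (Real.rpow_nonneg (mul_nonneg hθ.1.le hsn0) _)
      have hb : ∀ ω ∈ A, ‖f (η x y ω, ξ x y ω)‖ ≤ N * (θ * sn) ^ γ := by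
        intro ω hω
        rw [Real.norm_eq_abs, abs_of_nonneg (hf0 _)]
        have h1 : f (η x y ω, ξ x y ω) ≤ N * ‖η x y ω - ξ x y ω‖ ^ γ := min_le_left _ _
        have h2 : ‖η x y ω - ξ x y ω‖ = ‖ξ x y ω - η x y ω‖ := norm_sub_rev _ _
        have h3 : ‖ξ x y ω - η x y ω‖ ≤ θ * sn := hω
        have h4 : ‖η x y ω - ξ x y ω‖ ^ γ ≤ (θ * sn) ^ γ := by
          rw [h2]
          exact Real.rpow_le_rpow (norm_nonneg _) h3 hγ.1.le
        calc f (η x y ω, ξ x y ω) ≤ N * ‖η x y ω - ξ x y ω‖ ^ γ := h1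
        _ ≤ N * (θ * sn) ^ γ := mul_le_mul_of_nonneg_left h4 hN0.le
      have h := norm_setIntegral_le_of_norm_le_const (measure_lt_top (P x y) A) hb
      rw [Real.norm_eq_abs] at h
      have h5 := (abs_le.mp h).2
      calc ∫ ω in A, f (η x y ω, ξ x y ω) ∂(P x y)
          ≤ N * (θ * sn) ^ γ * ((P x y) A).toReal := h5
      _ ≤ N * (θ * sn) ^ γ * 1 := mul_le_mul_of_nonneg_left (htoReal_le_one A) hCnn
      _ = N * (θ * sn) ^ γ := mul_one _
    have hIAc : ∫ ω in Aᶜ, f (η x y ω, ξ x y ω) ∂(P x y) ≤ p sn := by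
      have hb : ∀ ω ∈ Aᶜ, ‖f (η x y ω, ξ x y ω)‖ ≤ 1 := by
        intro ω _
        rw [Real.norm_eq_abs, abs_of_nonneg (hf0 _)]
        exact hf1 _
      have h := norm_setIntegral_le_of_norm_le_const (measure_lt_top (P x y) Aᶜ) hb
      rw [Real.norm_eq_abs, one_mul] at h
      have h5 := (abs_le.mp h).2
      calc ∫ ω in Aᶜ, f (η x y ω, ξ x y ω) ∂(P x y) ≤ ((P x y) Aᶜ).toReal := h5
      _ ≤ p sn := by rw [hAc]; exact hclose x y hsυ
    have hIσc : ∫ z, f z ∂σc ≤ m.toReal := by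
      have hmono : (∫ z, f z ∂σc) ≤ ∫ _, (1:ℝ) ∂σc :=
        integral_mono (hfint _ inferInstance) (integrable_const 1) hf1
      calc (∫ z, f z ∂σc) ≤ ∫ _, (1:ℝ) ∂σc := hmono
      _ = (σc univ).toReal := by rw [integral_const, smul_eq_mul, mul_one]; rfl
      _ = m.toReal := by rw [hσc_univ]
    have hm_tv : m.toReal ≤ C * sn ^ γ := by
      have hνE_le : ν E ≤ μ y E := hE1 E hEm (subset_refl E)
      have hρ_univ_val : ρ univ = ν E + μ y Eᶜ := by
        rw [hρ_def, Measure.add_apply, Measure.restrict_apply_univ,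
          Measure.restrict_apply_univ]
      have hmy : μ y E + μ y Eᶜ = 1 := by
        rw [measure_add_measure_compl hEm, measure_univ]
      have hm_val : m = μ y univ - ρ univ := by
        rw [hm_def, hμ'_def, Measure.sub_apply MeasurableSet.univ hρμy]
      have hρ_le_univ : ρ univ ≤ μ y univ := Measure.le_iff'.mp hρμy univ
      have h1 : m.toReal = 1 - (ρ univ).toReal := by
        rw [hm_val, ENNReal.toReal_sub_of_le hρ_le_univ (measure_ne_top _ _),
          measure_univ, ENNReal.toReal_one]
      have h2 : (ρ univ).toReal = (ν E).toReal + (μ y Eᶜ).toReal := by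
        rw [hρ_univ_val, ENNReal.toReal_add (measure_ne_top _ _) (measure_ne_top _ _)]
      have h3 : (μ y E).toReal + (μ y Eᶜ).toReal = 1 := by
        have := congrArg ENNReal.toReal hmy
        rwa [ENNReal.toReal_add (measure_ne_top _ _) (measure_ne_top _ _),
          ENNReal.toReal_one] at this
      have h4 : m.toReal = (μ y E).toReal - (ν E).toReal := by
        rw [h1, h2]; linarith
      have hbdd2 : BddAbove (Set.range fun B : {s : Set (PathSpace r n) //
          MeasurableSet s} => |(ν ↑B).toReal - ((μ y) ↑B).toReal|) := by
        refine ⟨2, ?_⟩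
        rintro v ⟨B, rfl⟩
        have ha : (ν ↑B).toReal ≤ 1 := by
          calc (ν ↑B).toReal ≤ (1:ℝ≥0∞).toReal :=
            ENNReal.toReal_mono one_ne_top prob_le_one
          _ = 1 := ENNReal.toReal_one
        have hb : ((μ y) ↑B).toReal ≤ 1 := by
          calc ((μ y) ↑B).toReal ≤ (1:ℝ≥0∞).toReal :=
            ENNReal.toReal_mono one_ne_top prob_le_one
          _ = 1 := ENNReal.toReal_one
        have ha0 : 0 ≤ (ν ↑B).toReal := ENNReal.toReal_nonneg
        have hb0 : 0 ≤ ((μ y) ↑B).toReal := ENNReal.toReal_nonneg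
        rw [abs_le]
        constructor <;> linarith
      have htv_ge : |(ν E).toReal - ((μ y) E).toReal| ≤ tvDist ν (μ y) :=
        le_ciSup hbdd2 ⟨E, hEm⟩
      have h5 : |(ν E).toReal - ((μ y) E).toReal| = (μ y E).toReal - (ν E).toReal := by
        rw [abs_sub_comm]
        exact abs_of_nonneg (sub_nonneg.2
          (ENNReal.toReal_mono (measure_ne_top _ _) hνE_le))
      have h6 : tvDist ν (μ y) ≤ C * sn ^ γ := htv x y hsυ
      rw [h4, ← h5]
      exact le_trans htv_ge h6
    -- assemble
    have hfinal : couplingDist (dNg N γ) (μ x) (μ y) ≤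
        N * (θ * sn) ^ γ + p sn + C * sn ^ γ := by
      calc couplingDist (dNg N γ) (μ x) (μ y) ≤ ∫ z, f z ∂σ := key
      _ = (∫ z, f z ∂lamg) + ∫ z, f z ∂σc := hσ_split
      _ ≤ (∫ z, f z ∂lam) + m.toReal := add_le_add hgood hIσc
      _ ≤ (N * (θ * sn) ^ γ + p sn) + C * sn ^ γ := by
          rw [hlam_int, hsplit2]
          exact add_le_add (add_le_add hIA hIAc) hm_tv
      _ = N * (θ * sn) ^ γ + p sn + C * sn ^ γ := by ring
    rw [hdx]
    have hmulr : (θ * sn) ^ γ = θ ^ γ * sn ^ γ := Real.mul_rpow hθ.1.le hsn0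
    rw [hmulr] at hfinal
    have hNC2 : C ≤ ε₁ / 2 * N := by
      have h : ε₁ / 2 * (2 * C / ε₁) = C := by field_simp
      calc C = ε₁ / 2 * (2 * C / ε₁) := h.symm
      _ ≤ ε₁ / 2 * N := mul_le_mul_of_nonneg_left hNC (by positivity)
    have hε₂ : (0:ℝ) ≤ ε₁ / 2 := by positivity
    have hsle : sn ^ γ ≤ N * sn ^ γ := le_mul_of_one_le_left hsγpos.le hN1
    have e1 : p sn ≤ ε₁ / 2 * (N * sn ^ γ) :=
      le_trans hp_bound (mul_le_mul_of_nonneg_left hsle hε₂)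
    have e2 : C * sn ^ γ ≤ ε₁ / 2 * (N * sn ^ γ) := by
      have h := mul_le_mul_of_nonneg_right hNC2 hsγpos.le
      calc C * sn ^ γ ≤ ε₁ / 2 * N * sn ^ γ := h
      _ = ε₁ / 2 * (N * sn ^ γ) := by ring
    have hθ₁eq : θ₁ = θ ^ γ + ε₁ := by rw [hε₁_def]; ring
    rw [hθ₁eq]
    nlinarith [hfinal, e1, e2]
end

section
/- Under the hypotheses of the generalized-coupling contraction proposition — namely: γ ∈ (0,1], υ > 0, C > 0, θ ∈ (0,1), p : (0,∞) → [0,1] with p(s)/s^γ → 0 as s → 0, a family {μ^x : x ∈ 𝒞} of probability measures on 𝒞, and families of 𝒞-valued random elements ξ^{x,y}, η^{x,y} with Law(ξ^{x,y}) = μ^x, d_TV(Law(η^{x,y}), μ^y) ≤ C‖x−y‖^γ for ‖x−y‖ ≤ υ, and P(‖ξ^{x,y} − η^{x,y}‖ > θ‖x−y‖) ≤ p(‖x−y‖) for ‖x−y‖ ≤ υ — for every θ₁ ∈ (θ^γ,1) there exists N₀ such that for all N ≥ N₀ the coupling distance d_{N,γ} is non-expanding for the family: d_{N,γ}(μ^x,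 μ^y) ≤ d_{N,γ}(x,y) for ALL x, y ∈ 𝒞 (including those with d_{N,γ}(x,y) = 1). -/
open MeasureTheory Set

open scoped ENNReal

/-- Gluing lemma: given a coupling `κ` (prob measure on `α × α`) and a target second
marginal `m`, there is a measure `lam` with the same first marginal, second marginal `m`,
and `d`-cost exceeding that of `κ` by at most the TV distance of the second marginals. -/
lemma exists_coupling_modify {α : Type*} [MeasurableSpace α] (d : α × α → ℝ)
    (hdm : Measurable d) (hd0 : ∀ z, 0 ≤ d z) (hd1 : ∀ z, d z ≤ 1)
    (κ : Measure (α × α)) [IsProbabilityMeasure κ]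
    (m : Measure α) [IsProbabilityMeasure m] :
    ∃ lam : Measure (α × α), lam.map Prod.fst = κ.map Prod.fst ∧ lam.map Prod.snd = m ∧
      ∫ z, d z ∂lam ≤ ∫ z, d z ∂κ + tvDist (κ.map Prod.snd) m := by
  set ν : Measure α := κ.map Prod.snd with hν
  have hνprob : IsProbabilityMeasure ν := Measure.isProbabilityMeasure_map measurable_snd.aemeasurable
  have hμ0prob : IsProbabilityMeasure (κ.map Prod.fst) :=
    Measure.isProbabilityMeasure_map measurable_fst.aemeasurable
  obtain ⟨A, hA, hA1, hA2⟩ := hahn_decomposition (μ := ν) (ν := m)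
  -- ρ = min(ν, m)
  set ρ : Measure α := m.restrict A + ν.restrict Aᶜ with hρ
  have hρν : ρ ≤ ν := by
    rw [Measure.le_iff]
    intro s hs
    have h1 : m (s ∩ A) ≤ ν (s ∩ A) := hA1 _ (hs.inter hA) inter_subset_right
    have hsplit : ν (s ∩ A) + ν (s \ A) = ν s := measure_inter_add_diff s hA
    calc ρ s = m (s ∩ A) + ν (s ∩ Aᶜ) := by
          rw [hρ, Measure.add_apply, Measure.restrict_apply hs, Measure.restrict_apply hs]
      _ ≤ ν (s ∩ A) + ν (s \ A) := by rw [← diff_eq]; exact add_le_add h1 le_rfl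
      _ = ν s := hsplit
  have hρm : ρ ≤ m := by
    rw [Measure.le_iff]
    intro s hs
    have h2 : ν (s ∩ Aᶜ) ≤ m (s ∩ Aᶜ) := hA2 _ (hs.inter hA.compl) inter_subset_right
    have hsplit : m (s ∩ A) + m (s \ A) = m s := measure_inter_add_diff s hA
    calc ρ s = m (s ∩ A) + ν (s ∩ Aᶜ) := by
          rw [hρ, Measure.add_apply, Measure.restrict_apply hs, Measure.restrict_apply hs]
      _ ≤ m (s ∩ A) + m (s \ A) := by
          refine add_le_add le_rfl ?_
          rw [diff_eq]; exact h2
      _ = m s := hsplit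
  haveI hρfin : IsFiniteMeasure ρ := isFiniteMeasure_of_le m hρm
  have hρac : ρ ≪ ν := Measure.absolutelyContinuous_of_le hρν
  set g : α → ℝ≥0∞ := ρ.rnDeriv ν with hg
  have hgmeas : Measurable g := Measure.measurable_rnDeriv ρ ν
  have hg1 : g ≤ᵐ[ν] 1 := Measure.rnDeriv_le_one_of_le hρν
  have hgρ : ν.withDensity g = ρ := Measure.withDensity_rnDeriv_eq ρ ν hρac
  -- split κ
  set κ₁ : Measure (α × α) := κ.withDensity (fun z => g z.2) with hκ₁
  have hκ₁κ : κ₁ ≤ κ := by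
    have h1 : (fun z : α × α => g z.2) ≤ᵐ[κ] fun _ => 1 := by
      have : ∀ᵐ z ∂κ, g z.2 ≤ 1 := by
        rw [← MeasureTheory.ae_map_iff measurable_snd.aemeasurable
          (measurableSet_le hgmeas measurable_const)]
        exact hg1
      exact this
    calc κ₁ ≤ κ.withDensity (fun _ => 1) := withDensity_mono h1
      _ = κ := withDensity_one
  haveI : IsFiniteMeasure κ₁ := isFiniteMeasure_of_le κ hκ₁κ
  have hκ₁snd : κ₁.map Prod.snd = ρ := by
    ext B hB
    rw [Measure.map_apply measurable_snd hB, hκ₁,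
      withDensity_apply _ (measurable_snd hB), ← hgρ, withDensity_apply _ hB]
    exact (setLIntegral_map hB hgmeas measurable_snd).symm
  set a : Measure α := κ₁.map Prod.fst with ha
  have haμ0 : a ≤ κ.map Prod.fst := Measure.map_mono hκ₁κ measurable_fst
  haveI : IsFiniteMeasure a := isFiniteMeasure_of_le _ haμ0
  have hauniv : a univ = ρ univ := by
    rw [ha, Measure.map_apply measurable_fst MeasurableSet.univ, preimage_univ,
      ← preimage_univ (f := (Prod.snd : α × α → α)),
      ← Measure.map_apply measurable_snd MeasurableSet.univ, hκ₁snd]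
  set t : ℝ≥0∞ := 1 - ρ univ with ht
  have hρuniv_le : ρ univ ≤ 1 := by
    calc ρ univ ≤ m univ := hρm univ
      _ = 1 := measure_univ
  have htle : t ≤ 1 := tsub_le_self.trans le_rfl
  have htne : t ≠ ∞ := (lt_of_le_of_lt htle ENNReal.one_lt_top).ne
  set m₂ : Measure α := m - ρ with hm₂
  set μ₂ : Measure α := κ.map Prod.fst - a with hμ₂
  haveI : IsFiniteMeasure m₂ := isFiniteMeasure_of_le m Measure.sub_le
  haveI : IsFiniteMeasure μ₂ := isFiniteMeasure_of_le _ Measure.sub_le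
  have hm₂univ : m₂ univ = t := by
    rw [hm₂, Measure.sub_apply MeasurableSet.univ hρm, measure_univ]
  have hμ₂univ : μ₂ univ = t := by
    rw [hμ₂, Measure.sub_apply MeasurableSet.univ haμ0, measure_univ, hauniv]
  set lam : Measure (α × α) := κ₁ + t⁻¹ • (μ₂.prod m₂) with hlam
  refine ⟨lam, ?_, ?_, ?_⟩
  · -- first marginal
    rw [hlam, Measure.map_add _ _ measurable_fst, Measure.map_smul,
      Measure.map_fst_prod, hm₂univ]
    by_cases h0 : t = 0
    · have hμ₂0 : μ₂ = 0 := by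
        have := hμ₂univ; rw [h0] at this
        exact Measure.measure_univ_eq_zero.mp this
      have haeq : a = κ.map Prod.fst := by
        have := Measure.sub_add_cancel_of_le haμ0
        rw [← hμ₂, hμ₂0, zero_add] at this
        exact this
      rw [h0, zero_smul, smul_zero, add_zero, ← ha, haeq]
    · rw [smul_smul, ENNReal.inv_mul_cancel h0 htne, one_smul, add_comm]
      exact Measure.sub_add_cancel_of_le haμ0
  · -- second marginal
    rw [hlam, Measure.map_add _ _ measurable_snd, Measure.map_smul,
      Measure.map_snd_prod, hμ₂univ, hκ₁snd]
    by_cases h0 : t = 0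
    · have hm₂0 : m₂ = 0 := by
        have := hm₂univ; rw [h0] at this
        exact Measure.measure_univ_eq_zero.mp this
      have hρeq : ρ = m := by
        have := Measure.sub_add_cancel_of_le hρm
        rw [← hm₂, hm₂0, zero_add] at this
        exact this
      rw [h0, zero_smul, smul_zero, add_zero, hρeq]
    · rw [smul_smul, ENNReal.inv_mul_cancel h0 htne, one_smul, add_comm]
      exact Measure.sub_add_cancel_of_le hρm
  · -- cost bound
    have hd_int : ∀ (σ : Measure (α × α)) [IsFiniteMeasure σ], Integrable d σ := by
      intro σ _
      refine ⟨hdm.aestronglyMeasurable, ?_⟩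
      refine HasFiniteIntegral.of_bounded (C := 1) (Filter.Eventually.of_forall fun z => ?_)
      rw [Real.norm_eq_abs, abs_of_nonneg (hd0 z)]
      exact hd1 z
    set σ₂ : Measure (α × α) := t⁻¹ • (μ₂.prod m₂) with hσ₂
    have hσ₂univ : σ₂ univ = t := by
      rw [hσ₂, Measure.smul_apply, smul_eq_mul, ← univ_prod_univ, Measure.prod_prod,
        hμ₂univ, hm₂univ]
      by_cases h0 : t = 0
      · rw [h0]; simp
      · rw [← mul_assoc, ENNReal.inv_mul_cancel h0 htne, one_mul]
    haveI : IsFiniteMeasure σ₂ := ⟨by rw [hσ₂univ]; exact lt_of_le_of_lt htle ENNReal.one_lt_top⟩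
    rw [integral_add_measure (hd_int κ₁) (hd_int σ₂)]
    have h1 : ∫ z, d z ∂κ₁ ≤ ∫ z, d z ∂κ :=
      integral_mono_measure hκ₁κ (Filter.Eventually.of_forall hd0) (hd_int κ)
    have h2 : ∫ z, d z ∂σ₂ ≤ t.toReal := by
      calc ∫ z, d z ∂σ₂ ≤ ‖∫ z, d z ∂σ₂‖ := le_abs_self _
        _ ≤ 1 * (σ₂ univ).toReal := by
            refine norm_integral_le_of_norm_le_const (Filter.Eventually.of_forall fun z => ?_)
            rw [Real.norm_eq_abs, abs_of_nonneg (hd0 z)]; exact hd1 z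
        _ = t.toReal := by rw [one_mul, hσ₂univ]
    have h3 : t.toReal ≤ tvDist ν m := by
      have hρA : ρ univ = m A + ν Aᶜ := by
        rw [hρ, Measure.add_apply, Measure.restrict_apply_univ, Measure.restrict_apply_univ]
      have hνA : (ν Aᶜ).toReal = 1 - (ν A).toReal := by
        rw [measure_compl hA (measure_ne_top ν A), measure_univ,
          ENNReal.toReal_sub_of_le prob_le_one ENNReal.one_ne_top, ENNReal.toReal_one]
      have htval : t.toReal = (ν A).toReal - (m A).toReal := by
        rw [ht, ENNReal.toReal_sub_of_le hρuniv_le ENNReal.one_ne_top, ENNReal.toReal_one,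
          hρA, ENNReal.toReal_add (measure_ne_top m A) (measure_ne_top ν Aᶜ), hνA]
        ring
      have hbdd : BddAbove (Set.range fun B : {s : Set α // MeasurableSet s} =>
          |(ν B).toReal - (m B).toReal|) := by
        refine ⟨2, ?_⟩
        rintro x ⟨B, rfl⟩
        have h1 : (ν (B : Set α)).toReal ≤ 1 := by
          rw [← ENNReal.toReal_one]
          exact ENNReal.toReal_mono ENNReal.one_ne_top
            (by rw [← (measure_univ (μ := ν))]; exact measure_mono (subset_univ _))
        have h2 : (m (B : Set α)).toReal ≤ 1 := by
          rw [← ENNReal.toReal_one]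
          exact ENNReal.toReal_mono ENNReal.one_ne_top
            (by rw [← (measure_univ (μ := m))]; exact measure_mono (subset_univ _))
        have h3 : (0:ℝ) ≤ (ν (B : Set α)).toReal := ENNReal.toReal_nonneg
        have h4 : (0:ℝ) ≤ (m (B : Set α)).toReal := ENNReal.toReal_nonneg
        rw [abs_le]; constructor <;> nlinarith
      calc t.toReal = (ν A).toReal - (m A).toReal := htval
        _ ≤ |(ν A).toReal - (m A).toReal| := le_abs_self _
        _ ≤ tvDist ν m := le_ciSup hbdd ⟨A, hA⟩
    linarith

set_option maxHeartbeats 1000000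
set_option synthInstance.maxHeartbeats 400000

/-- Generalized coupling contraction proposition: if for each pair `x,y` there is a
generalized coupling `(ξ^{x,y}, η^{x,y})` with `Law(ξ^{x,y}) = μ^x`, whose second component
is `C‖x−y‖^γ`-close in total variation to `μ^y`, and whose components are `θ`-contracted with
probability at least `1 − p(‖x−y‖)`, then for every `θ₁ ∈ (θ^γ, 1)` there is `N₀` such that
for all `N ≥ N₀` the coupling distance `d_{N,γ}` contracts by the factor `θ₁` on the set
`{(x,y) : d_{N,γ}(x,y) < 1}`. -/
theorem generalized_coupling_nonexpanding
    (r : ℝ) (hr : 0 < r) (n : ℕ)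
    (γ υ C θ : ℝ) (hγ : γ ∈ Set.Ioc (0:ℝ) 1) (hυ : 0 < υ) (hC : 0 < C)
    (hθ : θ ∈ Set.Ioo (0:ℝ) 1)
    (p : ℝ → ℝ) (hp01 : ∀ s : ℝ, 0 < s → p s ∈ Set.Icc (0:ℝ) 1)
    (hplim : Filter.Tendsto (fun s => p s / s ^ γ) (nhdsWithin 0 (Set.Ioi 0)) (nhds 0))
    {Ω : Type} [MeasurableSpace Ω]
    (P : PathSpace r n → PathSpace r n → Measure Ω)
    (hP : ∀ x y, IsProbabilityMeasure (P x y))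
    (μ : PathSpace r n → Measure (PathSpace r n))
    (hμ : ∀ x, IsProbabilityMeasure (μ x))
    (ξ η : PathSpace r n → PathSpace r n → Ω → PathSpace r n)
    (hξm : ∀ x y, Measurable (ξ x y)) (hηm : ∀ x y, Measurable (η x y))
    (hlaw : ∀ x y, (P x y).map (ξ x y) = μ x)
    (htv : ∀ x y : PathSpace r n, ‖x - y‖ ≤ υ →
      tvDist ((P x y).map (η x y)) (μ y) ≤ C * ‖x - y‖ ^ γ)
    (hclose : ∀ x y : PathSpace r n, ‖x - y‖ ≤ υ →
      ((P x y) {ω | θ * ‖x - y‖ < ‖ξ x y ω - η x y ω‖}).toReal ≤ p ‖x - y‖) :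
    ∀ θ₁ ∈ Set.Ioo (θ ^ γ) 1, ∃ N₀ : ℝ, ∀ N ≥ N₀, ∀ x y : PathSpace r n,
      couplingDist (dNg N γ) (μ x) (μ y) ≤ dNg N γ x y := by
  intro θ₁ hθ₁
  obtain ⟨hγ0, hγ1⟩ := hγ
  have hθγ1 : θ ^ γ < 1 := Real.rpow_lt_one hθ.1.le hθ.2 hγ0
  -- choose δ from the limit hypothesis, with ε = 1
  obtain ⟨δ, hδ0, hδspec⟩ := (Metric.tendsto_nhdsWithin_nhds).mp hplim 1 one_pos
  set δ' : ℝ := min δ υ with hδ'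
  have hδ'0 : 0 < δ' := lt_min hδ0 hυ
  refine ⟨max (max 2 ((1 + C) / (1 - θ ^ γ))) (1 / δ' ^ γ), fun N hN x y => ?_⟩
  have hN2 : (2:ℝ) ≤ N := le_trans (le_max_left _ _) (le_trans (le_max_left _ _) hN)
  have hN0 : (0:ℝ) ≤ N := by linarith
  have hNpos : (0:ℝ) < N := by linarith
  have hNC : (1 + C) / (1 - θ ^ γ) ≤ N :=
    le_trans (le_max_right _ _) (le_trans (le_max_left _ _) hN)
  have hNδ : 1 / δ' ^ γ ≤ N := le_trans (le_max_right _ _) hN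
  -- basic facts about d
  set d : PathSpace r n × PathSpace r n → ℝ := fun z => dNg N γ z.1 z.2 with hd
  have hdcont : Continuous d := by
    refine Continuous.min ?_ continuous_const
    exact continuous_const.mul
      ((Real.continuous_rpow_const hγ0.le).comp (continuous_fst.sub continuous_snd).norm)
  have hdm : Measurable d := hdcont.measurable
  have hd0 : ∀ z, 0 ≤ d z := fun z =>
    le_min (mul_nonneg hN0 (Real.rpow_nonneg (norm_nonneg _) γ)) zero_le_one
  have hd1 : ∀ z, d z ≤ 1 := fun z => min_le_right _ _
  -- couplingDist is bounded by the cost of any coupling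
  have key : ∀ (π : Measure (PathSpace r n × PathSpace r n)),
      π.map Prod.fst = μ x → π.map Prod.snd = μ y →
      couplingDist (dNg N γ) (μ x) (μ y) ≤ ∫ z, d z ∂π := by
    intro π h1 h2
    unfold couplingDist
    refine ciInf_le ⟨0, ?_⟩
      (⟨π, h1, h2⟩ : {π : Measure (PathSpace r n × PathSpace r n) //
        π.map Prod.fst = μ x ∧ π.map Prod.snd = μ y})
    rintro w ⟨π', rfl⟩
    exact integral_nonneg fun z => hd0 z
  rcases eq_or_ne x y with rfl | hxy
  · -- diagonal coupling
    have hmdiag : Measurable (fun a : PathSpace r n => (a, a)) :=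
      measurable_id.prodMk measurable_id
    have hcost : ∫ z, d z ∂((μ x).map (fun a => (a, a))) = 0 := by
      rw [integral_map hmdiag.aemeasurable hdm.aestronglyMeasurable]
      have : ∀ a : PathSpace r n, d (a, a) = 0 := by
        intro a
        simp only [hd, dNg, sub_self, norm_zero, Real.zero_rpow hγ0.ne', mul_zero]
        exact min_eq_left zero_le_one
      simp [this]
    have h1 : ((μ x).map (fun a => (a, a))).map Prod.fst = μ x := by
      rw [Measure.map_map measurable_fst hmdiag]
      have : (Prod.fst ∘ fun a : PathSpace r n => (a, a)) = id := rfl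
      rw [this, Measure.map_id]
    have h2 : ((μ x).map (fun a => (a, a))).map Prod.snd = μ x := by
      rw [Measure.map_map measurable_snd hmdiag]
      have : (Prod.snd ∘ fun a : PathSpace r n => (a, a)) = id := rfl
      rw [this, Measure.map_id]
    have hdxx : dNg N γ x x = 0 := by
      simp only [dNg, sub_self, norm_zero, Real.zero_rpow hγ0.ne', mul_zero]
      exact min_eq_left zero_le_one
    rw [hdxx]
    calc couplingDist (dNg N γ) (μ x) (μ x) ≤ ∫ z, d z ∂((μ x).map (fun a => (a, a))) :=
          key _ h1 h2
      _ = 0 := hcost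
  · set s : ℝ := ‖x - y‖ with hs
    have hs0 : 0 < s := by
      rw [hs, norm_pos_iff]
      exact sub_ne_zero.mpr hxy
    by_cases hbig : 1 ≤ N * s ^ γ
    · -- product coupling, cost at most 1
      have hdNg1 : dNg N γ x y = 1 := min_eq_right hbig
      haveI := hμ x; haveI := hμ y
      have h1 : ((μ x).prod (μ y)).map Prod.fst = μ x := by
        rw [Measure.map_fst_prod]; simp
      have h2 : ((μ x).prod (μ y)).map Prod.snd = μ y := by
        rw [Measure.map_snd_prod]; simp
      have hcost : ∫ z, d z ∂((μ x).prod (μ y)) ≤ 1 := by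
        calc ∫ z, d z ∂((μ x).prod (μ y)) ≤ ‖∫ z, d z ∂((μ x).prod (μ y))‖ := le_abs_self _
          _ ≤ 1 * (((μ x).prod (μ y)) univ).toReal := by
              refine norm_integral_le_of_norm_le_const (Filter.Eventually.of_forall fun z => ?_)
              rw [Real.norm_eq_abs, abs_of_nonneg (hd0 z)]; exact hd1 z
          _ = 1 := by simp
      rw [hdNg1]
      exact le_trans (key _ h1 h2) hcost
    · push_neg at hbig
      have hdNg : dNg N γ x y = N * s ^ γ := min_eq_left hbig.le
      -- s is small
      have hsδ' : s < δ' := by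
        by_contra hcon
        push_neg at hcon
        have hmono : δ' ^ γ ≤ s ^ γ := Real.rpow_le_rpow hδ'0.le hcon hγ0.le
        have hδγ0 : 0 < δ' ^ γ := Real.rpow_pos_of_pos hδ'0 γ
        rw [div_le_iff₀ hδγ0] at hNδ
        have : 1 ≤ N * s ^ γ := by nlinarith
        linarith
      have hsυ : s ≤ υ := le_of_lt (lt_of_lt_of_le hsδ' (min_le_right _ _))
      have hps : p s ≤ s ^ γ := by
        have hd1' := hδspec (mem_Ioi.mpr hs0)
          (by rw [Real.dist_eq, sub_zero, abs_of_pos hs0]; exact lt_of_lt_of_le hsδ' (min_le_left _ _))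
        rw [Real.dist_eq, sub_zero] at hd1'
        have hsγ0 : 0 < s ^ γ := Real.rpow_pos_of_pos hs0 γ
        have := le_of_lt (lt_of_abs_lt hd1')
        calc p s = p s / s ^ γ * s ^ γ := by field_simp
          _ ≤ 1 * s ^ γ := by nlinarith
          _ = s ^ γ := one_mul _
      -- the generalized coupling
      haveI := hP x y
      set pair : Ω → PathSpace r n × PathSpace r n := fun ω => (ξ x y ω, η x y ω) with hpair
      have hpairm : Measurable pair := (hξm x y).prodMk (hηm x y)
      set κ : Measure (PathSpace r n × PathSpace r n) := (P x y).map pair with hκ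
      haveI : IsProbabilityMeasure κ := Measure.isProbabilityMeasure_map hpairm.aemeasurable
      have hκfst : κ.map Prod.fst = μ x := by
        rw [hκ, Measure.map_map measurable_fst hpairm]
        have : (Prod.fst ∘ pair) = ξ x y := rfl
        rw [this]
        exact hlaw x y
      have hκsnd : κ.map Prod.snd = (P x y).map (η x y) := by
        rw [hκ, Measure.map_map measurable_snd hpairm]
        have : (Prod.snd ∘ pair) = η x y := rfl
        rw [this]
      haveI := hμ y
      obtain ⟨lam, hfst, hsnd, hcost⟩ := exists_coupling_modify d hdm hd0 hd1 κ (μ y)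
      rw [hκfst] at hfst
      -- bound the κ-cost
      set E : Set Ω := {ω | θ * s < ‖ξ x y ω - η x y ω‖} with hE
      have hEmeas : MeasurableSet E := by
        have hm : Measurable fun ω => ‖ξ x y ω - η x y ω‖ :=
          ((hξm x y).sub (hηm x y)).norm
        exact measurableSet_lt measurable_const hm
      have hκcost : ∫ z, d z ∂κ ≤ N * θ ^ γ * s ^ γ + p s := by
        rw [hκ, integral_map hpairm.aemeasurable hdm.aestronglyMeasurable]
        have hptwise : ∀ ω, d (pair ω) ≤ N * (θ * s) ^ γ + E.indicator (fun _ => (1:ℝ)) ω := by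
          intro ω
          have hconst0 : 0 ≤ N * (θ * s) ^ γ :=
            mul_nonneg hN0 (Real.rpow_nonneg (mul_nonneg hθ.1.le hs0.le) γ)
          by_cases hω : ω ∈ E
          · rw [Set.indicator_of_mem hω]
            calc d (pair ω) ≤ 1 := hd1 _
              _ ≤ N * (θ * s) ^ γ + 1 := by linarith
          · rw [Set.indicator_of_notMem hω, add_zero]
            have hle : ‖ξ x y ω - η x y ω‖ ≤ θ * s := not_lt.mp hω
            calc d (pair ω) ≤ N * ‖ξ x y ω - η x y ω‖ ^ γ := min_le_left _ _
              _ ≤ N * (θ * s) ^ γ := by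
                  refine mul_le_mul_of_nonneg_left ?_ hN0
                  exact Real.rpow_le_rpow (norm_nonneg _) hle hγ0.le
        have hint1 : Integrable (fun ω => d (pair ω)) (P x y) := by
          refine ⟨(hdm.comp hpairm).aestronglyMeasurable, ?_⟩
          refine HasFiniteIntegral.of_bounded (C := 1) (Filter.Eventually.of_forall fun ω => ?_)
          rw [Real.norm_eq_abs, abs_of_nonneg (hd0 _)]; exact hd1 _
        have hint2 : Integrable (fun ω => N * (θ * s) ^ γ + E.indicator (fun _ => (1:ℝ)) ω)
            (P x y) := by
          exact (integrable_const _).add ((integrable_const (1:ℝ)).indicator hEmeas)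
        calc ∫ ω, d (pair ω) ∂(P x y)
            ≤ ∫ ω, (N * (θ * s) ^ γ + E.indicator (fun _ => (1:ℝ)) ω) ∂(P x y) :=
              integral_mono hint1 hint2 hptwise
          _ = N * (θ * s) ^ γ + ((P x y) E).toReal := by
              rw [integral_add (integrable_const _) ((integrable_const (1:ℝ)).indicator hEmeas),
                integral_const, integral_indicator_const (1:ℝ) hEmeas]
              simp
              rfl
          _ ≤ N * θ ^ γ * s ^ γ + p s := by
              have h1 : ((P x y) E).toReal ≤ p s := hclose x y hsυ
              rw [Real.mul_rpow hθ.1.le hs0.le, ← mul_assoc]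
              linarith
      have htvb : tvDist (κ.map Prod.snd) (μ y) ≤ C * s ^ γ := by
        rw [hκsnd]; exact htv x y hsυ
      -- final estimate
      have hsγ0 : (0:ℝ) ≤ s ^ γ := Real.rpow_nonneg hs0.le γ
      have hfin : N * θ ^ γ * s ^ γ + p s + C * s ^ γ ≤ N * s ^ γ := by
        have hNC' : 1 + C ≤ N * (1 - θ ^ γ) := by
          rw [div_le_iff₀ (by linarith : (0:ℝ) < 1 - θ ^ γ)] at hNC
          linarith
        nlinarith [hps]
      rw [hdNg]
      calc couplingDist (dNg N γ) (μ x) (μ y) ≤ ∫ z, d z ∂lam := key lam hfst hsnd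
        _ ≤ ∫ z, d z ∂κ + tvDist (κ.map Prod.snd) (μ y) := hcost
        _ ≤ N * θ ^ γ * s ^ γ + p s + C * s ^ γ := by linarith
        _ ≤ N * s ^ γ := hfin
end

section
/- Let μ and ν be probability measures on a measurable space (X, 𝒳) with μ absolutely continuous with respect to ν. Then for every N > 1 and every measurable set A ∈ 𝒳, one has ν(A) ≥ (1/N) μ(A) − (D_KL(μ‖ν) + log 2)/(N log N). -/
open MeasureTheory

lemma aux_mul_neg_log_le (x : ℝ) (hx : 0 ≤ x) : x * max (-Real.log x) 0 ≤ 1 / 2 := by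
  rcases eq_or_lt_of_le hx with h | h
  · simp [← h]
  rcases le_or_gt 1 x with h1 | h1
  · have hl : 0 ≤ Real.log x := Real.log_nonneg h1
    rw [max_eq_right (by linarith)]
    norm_num
  · have hl : Real.log x < 0 := Real.log_neg h h1
    rw [max_eq_left (by linarith)]
    set t := Real.sqrt x with ht
    have htpos : 0 < t := Real.sqrt_pos.mpr h
    have htx : t * t = x := Real.mul_self_sqrt hx
    have hlog2 : Real.log x = 2 * Real.log t := by
      rw [← htx, Real.log_mul htpos.ne' htpos.ne']; ring
    have hkey : Real.log t⁻¹ ≤ t⁻¹ - 1 := Real.log_le_sub_one_of_pos (by positivity)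
    rw [Real.log_inv] at hkey
    -- -log t ≤ 1/t - 1, multiply by t > 0: t * (-log t) ≤ 1 - t
    have h2 : t * (-Real.log t) ≤ 1 - t := by
      have := mul_le_mul_of_nonneg_left hkey htpos.le
      rw [mul_sub, mul_inv_cancel₀ htpos.ne'] at this
      linarith
    have h3 : x * (-Real.log x) = 2 * t * (t * (-Real.log t)) := by
      rw [hlog2, ← htx]; ring
    nlinarith [sq_nonneg (t - 1 / 2)]

/-- Kullback–Leibler lower bound: for probability measures `μ ≪ ν` with
`D_KL(μ‖ν) = ∫ log(dμ/dν) dμ` (assumed well defined, i.e. the log-likelihood ratio is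
`μ`-integrable), every `N > 1` and every measurable set `A` satisfy
`ν(A) ≥ (1/N) μ(A) − (D_KL(μ‖ν) + log 2)/(N log N)`. -/
theorem kl_lower_bound
    {X : Type*} [MeasurableSpace X] (μ ν : Measure X)
    [IsProbabilityMeasure μ] [IsProbabilityMeasure ν]
    (hac : μ ≪ ν)
    (hInt : Integrable (fun x => Real.log (μ.rnDeriv ν x).toReal) μ) :
    ∀ N : ℝ, 1 < N → ∀ A : Set X, MeasurableSet A →
      (1 / N) * (μ A).toReal -
        ((∫ x, Real.log (μ.rnDeriv ν x).toReal ∂μ) + Real.log 2) / (N * Real.log N)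
      ≤ (ν A).toReal := by
  intro N hN A hA
  set r : X → ℝ := fun x => (μ.rnDeriv ν x).toReal with hr
  set D : ℝ := ∫ x, Real.log (r x) ∂μ with hD
  have hrmeas : Measurable r := (Measure.measurable_rnDeriv μ ν).ennreal_toReal
  have hrnn : ∀ x, 0 ≤ r x := fun x => ENNReal.toReal_nonneg
  have hNpos : (0 : ℝ) < N := lt_trans one_pos hN
  have hlogN : 0 < Real.log N := Real.log_pos hN
  set S : Set X := {x | r x ≤ N} with hS
  have hSmeas : MeasurableSet S := measurableSet_le hrmeas measurable_const
  -- Step 1: μ(A ∩ S) ≤ N ν(A)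
  have h1 : (μ (A ∩ S)).toReal ≤ N * (ν A).toReal := by
    have heq : ∫ x in A ∩ S, r x ∂ν = (μ (A ∩ S)).toReal :=
      Measure.setIntegral_toReal_rnDeriv hac (A ∩ S)
    have hmono : ∫ x in A ∩ S, r x ∂ν ≤ ∫ _x in A ∩ S, N ∂ν := by
      refine setIntegral_mono_on (Measure.integrable_toReal_rnDeriv.integrableOn)
        ((integrableOn_const_iff).mpr (Or.inr (measure_lt_top _ _)))
        (hA.inter hSmeas) ?_
      intro x hx
      exact hx.2
    rw [heq] at hmono
    calc (μ (A ∩ S)).toReal ≤ ∫ _x in A ∩ S, N ∂ν := hmono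
      _ = (ν (A ∩ S)).toReal * N := by rw [setIntegral_const, smul_eq_mul, measureReal_def]
      _ ≤ (ν A).toReal * N :=
          mul_le_mul_of_nonneg_right
            (ENNReal.toReal_mono (measure_ne_top _ _)
              (measure_mono Set.inter_subset_left)) hNpos.le
      _ = N * (ν A).toReal := mul_comm _ _
  -- Step 2: μ(Sᶜ) log N ≤ D + log 2
  have hIntPos : Integrable (fun x => max (Real.log (r x)) 0) μ := hInt.pos_part
  have hIntNeg : Integrable (fun x => max (-(Real.log (r x))) 0) μ := hInt.neg.pos_part
  have h2a : (μ Sᶜ).toReal * Real.log N ≤ ∫ x in Sᶜ, Real.log (r x) ∂μ := by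
    have : ∫ _x in Sᶜ, Real.log N ∂μ ≤ ∫ x in Sᶜ, Real.log (r x) ∂μ := by
      refine setIntegral_mono_on ((integrableOn_const_iff).mpr (Or.inr (measure_lt_top _ _)))
        hInt.integrableOn hSmeas.compl ?_
      intro x hx
      have hxN : N < r x := lt_of_not_ge hx
      exact Real.log_le_log hNpos hxN.le
    rwa [setIntegral_const, smul_eq_mul, measureReal_def] at this
  have h2b : ∫ x in Sᶜ, Real.log (r x) ∂μ ≤ ∫ x, max (Real.log (r x)) 0 ∂μ := by
    calc ∫ x in Sᶜ, Real.log (r x) ∂μ ≤ ∫ x in Sᶜ, max (Real.log (r x)) 0 ∂μ :=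
          setIntegral_mono_on hInt.integrableOn hIntPos.integrableOn hSmeas.compl
            (fun x _ => le_max_left _ _)
      _ ≤ ∫ x, max (Real.log (r x)) 0 ∂μ :=
          setIntegral_le_integral hIntPos (Filter.Eventually.of_forall fun x => le_max_right _ _)
  have h2c : ∫ x, max (Real.log (r x)) 0 ∂μ = D + ∫ x, max (-(Real.log (r x))) 0 ∂μ := by
    have hptw : ∀ x, max (Real.log (r x)) 0
        = Real.log (r x) + max (-(Real.log (r x))) 0 := by
      intro x
      rcases le_total (Real.log (r x)) 0 with h | h
      · rw [max_eq_right h, max_eq_left (by linarith)]; ring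
      · rw [max_eq_left h, max_eq_right (by linarith)]; ring
    simp_rw [hptw]
    rw [integral_add hInt hIntNeg]
  have h2d : ∫ x, max (-(Real.log (r x))) 0 ∂μ ≤ Real.log 2 := by
    have hcm : ∫ x, max (-(Real.log (r x))) 0 ∂μ
        = ∫ x, r x * max (-(Real.log (r x))) 0 ∂ν := by
      rw [← MeasureTheory.integral_rnDeriv_smul hac]
      simp_rw [smul_eq_mul]
      rfl
    have hbound : ∫ x, r x * max (-(Real.log (r x))) 0 ∂ν ≤ 1 / 2 := by
      have hmeas : Measurable fun x => r x * max (-(Real.log (r x))) 0 :=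
        hrmeas.mul ((hrmeas.log.neg).max measurable_const)
      have hIntg : Integrable (fun x => r x * max (-(Real.log (r x))) 0) ν := by
        refine ⟨hmeas.aestronglyMeasurable, ?_⟩
        refine HasFiniteIntegral.of_bounded (C := 1 / 2) ?_
        refine Filter.Eventually.of_forall fun x => ?_
        rw [Real.norm_eq_abs, abs_of_nonneg (mul_nonneg (hrnn x) (le_max_right _ _))]
        exact aux_mul_neg_log_le (r x) (hrnn x)
      calc ∫ x, r x * max (-(Real.log (r x))) 0 ∂ν ≤ ∫ _x, (1 : ℝ) / 2 ∂ν :=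
            integral_mono hIntg (integrable_const _)
              (fun x => aux_mul_neg_log_le (r x) (hrnn x))
        _ = 1 / 2 := by simp
    have hlog2 : (1 : ℝ) / 2 ≤ Real.log 2 := by
      have := Real.log_two_gt_d9
      linarith
    linarith [hcm ▸ hbound]
  have h2 : (μ Sᶜ).toReal ≤ (D + Real.log 2) / Real.log N := by
    rw [le_div_iff₀ hlogN]
    linarith
  -- Step 3: μ(A) ≤ μ(A ∩ S) + μ(Sᶜ)
  have h3 : (μ A).toReal ≤ (μ (A ∩ S)).toReal + (μ Sᶜ).toReal := by
    have : μ A ≤ μ (A ∩ S) + μ Sᶜ := by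
      calc μ A = μ (A ∩ S) + μ (A \ S) := (measure_inter_add_diff A hSmeas).symm
        _ ≤ μ (A ∩ S) + μ Sᶜ := add_le_add le_rfl
            (measure_mono fun x hx => hx.2)
    calc (μ A).toReal ≤ (μ (A ∩ S) + μ Sᶜ).toReal :=
          ENNReal.toReal_mono (by finiteness) this
      _ = (μ (A ∩ S)).toReal + (μ Sᶜ).toReal :=
          ENNReal.toReal_add (measure_ne_top _ _) (measure_ne_top _ _)
  -- Combine
  have hkey : (μ A).toReal ≤ N * (ν A).toReal + (D + Real.log 2) / Real.log N := by
    linarith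
  have hmain : ((μ A).toReal - (D + Real.log 2) / Real.log N) / N ≤ (ν A).toReal := by
    rw [div_le_iff₀ hNpos]
    linarith
  have heq : (1 / N) * (μ A).toReal - (D + Real.log 2) / (N * Real.log N)
      = ((μ A).toReal - (D + Real.log 2) / Real.log N) / N := by
    field_simp
  rw [heq]
  exact hmain
end

section
/- Let δ ∈ (0,1), λ > 0, N ≥ 0, T > 0, and let h : [0,T] → ℝ be a continuous function with h(0) = 0 satisfying the Hölder bound |h(t) − h(s)| ≤ N|t−s|^δ for all s, t ∈ [0,T]. Then for every t ∈ [0,T], ∫₀ᵗ (h(t) − h(s)) · λ e^{−λ(t−s)} ds + e^{−λt} h(t) ≤ N λ^{−δ} ( Γ(δ) + sup_{x>0} x^δ e^{−x} ), where Γ denotes the Gamma function. -/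
open MeasureTheory Set

private lemma rpow_exp_le_one {δ : ℝ} (hδ0 : 0 < δ) (hδ1 : δ ≤ 1) :
    ∀ x : ℝ, 0 < x → x ^ δ * Real.exp (-x) ≤ 1 := by
  intro x hx
  rcases le_total x 1 with hx1 | hx1
  · have h1 : x ^ δ ≤ 1 := Real.rpow_le_one hx.le hx1 hδ0.le
    have h2 : Real.exp (-x) ≤ 1 := Real.exp_le_one_iff.mpr (by linarith)
    calc x ^ δ * Real.exp (-x) ≤ 1 * 1 :=
          mul_le_mul h1 h2 (Real.exp_pos _).le zero_le_one
      _ = 1 := by ring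
  · have h1 : x ^ δ ≤ x := by
      calc x ^ δ ≤ x ^ (1:ℝ) := Real.rpow_le_rpow_of_exponent_le hx1 hδ1
        _ = x := Real.rpow_one x
    have h2 : x ≤ Real.exp x := (Real.add_one_le_exp x).trans' (by linarith)
    have h3 : x * Real.exp (-x) ≤ 1 := by
      rw [Real.exp_neg, mul_inv_le_iff₀ (Real.exp_pos x), one_mul]
      exact h2
    calc x ^ δ * Real.exp (-x) ≤ x * Real.exp (-x) :=
          mul_le_mul_of_nonneg_right h1 (Real.exp_pos _).le
      _ ≤ 1 := h3

/-- Deterministic convolution estimate for Hölder functions: if `h` is continuous on `[0,T]`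
with `h(0) = 0` and `|h(t) − h(s)| ≤ N|t−s|^δ` on `[0,T]`, then for every `t ∈ [0,T]`,
`∫₀ᵗ (h(t) − h(s)) λ e^{−λ(t−s)} ds + e^{−λt} h(t) ≤ N λ^{−δ} (Γ(δ) + sup_{x>0} x^δ e^{−x})`. -/
theorem holder_exponential_convolution_bound
    (δ lam N T : ℝ) (hδ : δ ∈ Set.Ioo (0:ℝ) 1) (hlam : 0 < lam) (hN : 0 ≤ N) (hT : 0 < T)
    (h : ℝ → ℝ) (hcont : ContinuousOn h (Set.Icc 0 T)) (h0 : h 0 = 0)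
    (hHolder : ∀ s ∈ Set.Icc (0:ℝ) T, ∀ t ∈ Set.Icc (0:ℝ) T,
      |h t - h s| ≤ N * |t - s| ^ δ) :
    ∀ t ∈ Set.Icc (0:ℝ) T,
      (∫ s in (0:ℝ)..t, (h t - h s) * (lam * Real.exp (-lam * (t - s))))
          + Real.exp (-lam * t) * h t
        ≤ N * lam ^ (-δ) *
            (Real.Gamma δ + ⨆ x : {x : ℝ // 0 < x}, (x : ℝ) ^ δ * Real.exp (-(x : ℝ))) := by
  obtain ⟨hδ0, hδ1⟩ := hδ
  intro t ht
  obtain ⟨ht0, htT⟩ := ht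
  set A : ℝ := ⨆ x : {x : ℝ // 0 < x}, (x : ℝ) ^ δ * Real.exp (-(x : ℝ)) with hA
  have hbdd : BddAbove (Set.range fun x : {x : ℝ // 0 < x} =>
      (x : ℝ) ^ δ * Real.exp (-(x : ℝ))) := by
    refine ⟨1, ?_⟩
    rintro y ⟨⟨x, hx⟩, rfl⟩
    exact rpow_exp_le_one hδ0 hδ1.le x hx
  have hA0 : 0 ≤ A := by
    have := le_ciSup hbdd ⟨1, one_pos⟩
    refine le_trans ?_ this
    positivity
  -- bound on the boundary term
  have hbound2 : Real.exp (-lam * t) * h t ≤ N * lam ^ (-δ) * A := by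
    rcases eq_or_lt_of_le ht0 with rfl | ht0'
    · simp [h0]
      positivity
    · have hht : |h t| ≤ N * t ^ δ := by
        have := hHolder 0 ⟨le_refl 0, hT.le⟩ t ⟨ht0, htT⟩
        simpa [h0, abs_of_pos ht0'] using this
      have hlt : 0 < lam * t := mul_pos hlam ht0'
      have key : (lam * t) ^ δ * Real.exp (-(lam * t)) ≤ A :=
        le_ciSup hbdd ⟨lam * t, hlt⟩
      have hexp : Real.exp (-lam * t) * h t ≤ Real.exp (-(lam * t)) * (N * t ^ δ) := by
        rw [neg_mul]
        exact mul_le_mul_of_nonneg_left ((le_abs_self _).trans hht) (Real.exp_pos _).le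
      refine hexp.trans ?_
      have hid : Real.exp (-(lam * t)) * (N * t ^ δ) =
          N * lam ^ (-δ) * ((lam * t) ^ δ * Real.exp (-(lam * t))) := by
        rw [Real.mul_rpow hlam.le ht0'.le, Real.rpow_neg hlam.le]
        field_simp
      rw [hid]
      exact mul_le_mul_of_nonneg_left key (by positivity)
  -- bound on the integral term
  have hIccsub : Set.Icc (0:ℝ) t ⊆ Set.Icc 0 T := Set.Icc_subset_Icc le_rfl htT
  have hint1 : IntervalIntegrable
      (fun s => (h t - h s) * (lam * Real.exp (-lam * (t - s)))) volume 0 t := by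
    apply ContinuousOn.intervalIntegrable
    rw [Set.uIcc_of_le ht0]
    apply ContinuousOn.mul
    · exact (continuousOn_const.sub (hcont.mono hIccsub))
    · exact (continuous_const.mul ((continuous_const.mul
        (continuous_const.sub continuous_id)).rexp)).continuousOn
  have hcont2 : Continuous (fun s : ℝ => N * (t - s) ^ δ * (lam * Real.exp (-lam * (t - s)))) := by
    apply Continuous.mul
    · exact continuous_const.mul ((continuous_const.sub continuous_id).rpow_const
        (fun s => Or.inr hδ0.le))
    · exact continuous_const.mul ((continuous_const.mul
        (continuous_const.sub continuous_id)).rexp)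
  have hint2 : IntervalIntegrable
      (fun s => N * (t - s) ^ δ * (lam * Real.exp (-lam * (t - s)))) volume 0 t :=
    hcont2.intervalIntegrable 0 t
  have hbound1 : (∫ s in (0:ℝ)..t, (h t - h s) * (lam * Real.exp (-lam * (t - s))))
      ≤ ∫ s in (0:ℝ)..t, N * (t - s) ^ δ * (lam * Real.exp (-lam * (t - s))) := by
    apply intervalIntegral.integral_mono_on ht0 hint1 hint2
    intro s hs
    have hHs := hHolder s (hIccsub hs) t ⟨ht0, htT⟩
    have hle : h t - h s ≤ N * (t - s) ^ δ := by
      have : |t - s| = t - s := abs_of_nonneg (by linarith [hs.2])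
      calc h t - h s ≤ |h t - h s| := le_abs_self _
        _ ≤ N * |t - s| ^ δ := hHs
        _ = N * (t - s) ^ δ := by rw [this]
    exact mul_le_mul_of_nonneg_right hle (by positivity)
  -- change of variables and comparison with Gamma integral
  have hcv : (∫ s in (0:ℝ)..t, N * (t - s) ^ δ * (lam * Real.exp (-lam * (t - s))))
      = ∫ u in (0:ℝ)..t, N * u ^ δ * (lam * Real.exp (-lam * u)) := by
    have := intervalIntegral.integral_comp_sub_left
      (fun u => N * u ^ δ * (lam * Real.exp (-lam * u))) t (a := 0) (b := t)
    simpa using this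
  have hIoigamma : (∫ u in Set.Ioi (0:ℝ), u ^ δ * Real.exp (-(lam * u)))
      = (1 / lam) ^ (δ + 1) * Real.Gamma (δ + 1) := by
    have := Real.integral_rpow_mul_exp_neg_mul_Ioi (a := δ + 1) (r := lam)
      (by linarith) hlam
    simpa using this
  have hIoiInt : IntegrableOn (fun u : ℝ => u ^ δ * Real.exp (-(lam * u))) (Set.Ioi 0) := by
    have := integrableOn_rpow_mul_exp_neg_mul_rpow (p := 1) (s := δ) (b := lam)
      (by linarith) (by norm_num) hlam
    refine this.congr_fun (fun x _ => ?_) measurableSet_Ioi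
    simp only [Real.rpow_one, neg_mul]
  have hmono : (∫ u in (0:ℝ)..t, N * u ^ δ * (lam * Real.exp (-lam * u)))
      ≤ N * lam * ((1 / lam) ^ (δ + 1) * Real.Gamma (δ + 1)) := by
    rw [intervalIntegral.integral_of_le ht0]
    have heq : ∀ u : ℝ, N * u ^ δ * (lam * Real.exp (-lam * u))
        = (N * lam) * (u ^ δ * Real.exp (-(lam * u))) := by
      intro u; rw [neg_mul]; ring
    simp_rw [heq]
    rw [integral_const_mul, ← hIoigamma]
    apply mul_le_mul_of_nonneg_left _ (by positivity)
    apply setIntegral_mono_set hIoiInt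
    · filter_upwards [self_mem_ae_restrict measurableSet_Ioi] with x hx
      have : (0:ℝ) < x := hx
      positivity
    · exact (Set.Ioc_subset_Ioi_self).eventuallyLE
  have hGamma : N * lam * ((1 / lam) ^ (δ + 1) * Real.Gamma (δ + 1))
      ≤ N * lam ^ (-δ) * Real.Gamma δ := by
    rw [Real.Gamma_add_one hδ0.ne']
    have h1 : lam * (1 / lam) ^ (δ + 1) = lam ^ (-δ) := by
      rw [one_div, ← Real.rpow_neg_one lam, ← Real.rpow_mul hlam.le,
        show lam * lam ^ (-1 * (δ + 1)) = lam ^ (1:ℝ) * lam ^ (-1 * (δ + 1)) from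
          by rw [Real.rpow_one], ← Real.rpow_add hlam]
      norm_num
    have h2 : N * lam * ((1 / lam) ^ (δ + 1) * (δ * Real.Gamma δ))
        = (N * lam ^ (-δ) * Real.Gamma δ) * δ := by
      rw [← h1]; ring
    rw [h2]
    have hG : 0 ≤ N * lam ^ (-δ) * Real.Gamma δ := by
      have := Real.Gamma_pos_of_pos hδ0
      positivity
    nlinarith
  calc (∫ s in (0:ℝ)..t, (h t - h s) * (lam * Real.exp (-lam * (t - s))))
        + Real.exp (-lam * t) * h t
      ≤ N * lam ^ (-δ) * Real.Gamma δ + N * lam ^ (-δ) * A := by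
        apply add_le_add _ hbound2
        calc _ ≤ _ := hbound1
          _ = _ := hcv
          _ ≤ _ := hmono
          _ ≤ _ := hGamma
    _ = N * lam ^ (-δ) * (Real.Gamma δ + A) := by ring
end

section
/- Let (W_t)_{t≥0} be a standard one-dimensional Brownian motion, and fix δ ∈ (0,1/2) and T > 0. Then there exist constants c₁, c₂ > 0, depending only on δ and T, such that for every N > 0, P( there exist s, t ∈ [0,T] with |W_t − W_s| > N|t−s|^δ ) ≤ c₁ e^{−c₂ N²}. -/
open MeasureTheory Set Real ProbabilityTheory
open scoped NNReal ENNReal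

set_option maxHeartbeats 2000000

lemma my_integral_exp_neg_mul (a : ℝ) {b : ℝ} (hb : 0 < b) :
    ∫ x in Ioi a, Real.exp (-b * x) = Real.exp (-(b * a)) / b := by
  have h := integral_comp_mul_left_Ioi (fun x => Real.exp (-x)) a hb
  simp only [smul_eq_mul] at h
  simp only [neg_mul]
  rw [h, integral_exp_neg_Ioi]
  rw [inv_mul_eq_div]

lemma my_gauss_onesided {v : ℝ≥0} (hv : 0 < (v:ℝ)) {a : ℝ} (ha0 : 0 < a) :
    ∫ x in Ioi a, gaussianPDFReal 0 v x
      ≤ (Real.sqrt (2 * π * v))⁻¹ * (v / a) * Real.exp (-a ^ 2 / (2 * v)) := by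
  have hb : 0 < a / (v:ℝ) := div_pos ha0 hv
  have hC : 0 < (Real.sqrt (2 * π * v))⁻¹ := by
    rw [inv_pos]
    exact Real.sqrt_pos.2 (by have := Real.pi_pos; positivity)
  have hE : Real.exp (a ^ 2 / (2 * (v:ℝ))) * Real.exp (-(a / ↑v * a))
      = Real.exp (-a ^ 2 / (2 * ↑v)) := by
    rw [← Real.exp_add]
    congr 1
    field_simp
    ring
  have hint : ∫ x in Ioi a,
      (Real.sqrt (2 * π * v))⁻¹ * Real.exp (a ^ 2 / (2 * v)) * Real.exp (-(a / v) * x)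
      = (Real.sqrt (2 * π * v))⁻¹ * (v / a) * Real.exp (-a ^ 2 / (2 * v)) := by
    rw [MeasureTheory.integral_const_mul, my_integral_exp_neg_mul a hb,
      div_eq_mul_inv (Real.exp (-(a / ↑v * a))), inv_div, ← hE]
    ring
  rw [← hint]
  refine setIntegral_mono_on (integrable_gaussianPDFReal 0 v).restrict ?_ measurableSet_Ioi ?_
  · exact (exp_neg_integrableOn_Ioi a hb).const_mul _
  · intro x hx
    simp only [mem_Ioi] at hx
    simp only [gaussianPDFReal]
    rw [mul_assoc _ (Real.exp _) (Real.exp _), ← Real.exp_add]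
    apply mul_le_mul_of_nonneg_left _ hC.le
    apply Real.exp_le_exp.2
    rw [← sub_nonpos]
    have key : -(x - 0) ^ 2 / (2 * (v:ℝ)) - (a ^ 2 / (2 * ↑v) + -(a / ↑v) * x)
        = -((x - a) ^ 2) / (2 * ↑v) := by
      field_simp
      ring
    rw [key]
    exact div_nonpos_of_nonpos_of_nonneg (neg_nonpos.2 (sq_nonneg _)) (by positivity)

lemma my_gauss_tail {v : ℝ≥0} (hv : 0 < (v:ℝ)) {a : ℝ} (ha0 : 0 < a)
    (ha : Real.sqrt v ≤ a) :
    gaussianReal 0 v {x | a < |x|}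
      ≤ ENNReal.ofReal (2 * Real.exp (-a ^ 2 / (2 * v))) := by
  have hvne : v ≠ 0 := by
    intro h
    rw [h] at hv
    simp at hv
  have hset : {x : ℝ | a < |x|} = Ioi a ∪ Iio (-a) := by
    ext x
    simp only [mem_setOf_eq, mem_union, mem_Ioi, mem_Iio, lt_abs, lt_neg]
  have hsym : gaussianReal 0 v (Iio (-a)) = gaussianReal 0 v (Ioi a) := by
    have hmap := gaussianReal_map_const_mul (μ := 0) (v := v) (-1)
    have hv' : (NNReal.mk ((-1:ℝ)^2) (sq_nonneg _) * v : ℝ≥0) = v := by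
      ext
      norm_num [NNReal.coe_mul, NNReal.coe_mk]
    rw [mul_zero, hv'] at hmap
    conv_lhs => rw [← hmap]
    rw [Measure.map_apply (by fun_prop) measurableSet_Iio]
    congr 1
    ext x
    simp only [mem_preimage, mem_Iio, mem_Ioi, neg_mul, one_mul, neg_lt_neg_iff]
  have hone : gaussianReal 0 v (Ioi a) ≤ ENNReal.ofReal (Real.exp (-a ^ 2 / (2 * v))) := by
    rw [gaussianReal_apply_eq_integral 0 hvne]
    apply ENNReal.ofReal_le_ofReal
    refine (my_gauss_onesided hv ha0).trans ?_
    have h2pi : (1:ℝ) ≤ Real.sqrt (2 * π) := by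
      rw [show (1:ℝ) = Real.sqrt 1 from (Real.sqrt_one).symm]
      apply Real.sqrt_le_sqrt
      nlinarith [Real.pi_gt_three]
    have hsv : 0 < Real.sqrt v := Real.sqrt_pos.2 hv
    have h1 : (v:ℝ) / a ≤ Real.sqrt v := by
      rw [div_le_iff₀ ha0]
      calc (v:ℝ) = Real.sqrt v * Real.sqrt v := (Real.mul_self_sqrt v.2).symm
      _ ≤ Real.sqrt v * a := mul_le_mul_of_nonneg_left ha hsv.le
    have hpref : (Real.sqrt (2 * π * v))⁻¹ * ((v:ℝ) / a) ≤ 1 := by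
      rw [show (2 * π * (v:ℝ)) = (2 * π) * v by ring, Real.sqrt_mul (by positivity),
        inv_mul_eq_div, div_div, div_le_one (by positivity)]
      calc (v:ℝ) = Real.sqrt v * Real.sqrt v := (Real.mul_self_sqrt v.2).symm
      _ ≤ a * Real.sqrt v := mul_le_mul_of_nonneg_right ha hsv.le
      _ = a * (1 * Real.sqrt v) := by ring
      _ ≤ a * (Real.sqrt (2 * π) * Real.sqrt v) := by
          apply mul_le_mul_of_nonneg_left _ ha0.le
          exact mul_le_mul_of_nonneg_right h2pi hsv.le
    calc (Real.sqrt (2 * π * v))⁻¹ * ((v:ℝ) / a) * Real.exp (-a ^ 2 / (2 * v))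
        ≤ 1 * Real.exp (-a ^ 2 / (2 * v)) :=
          mul_le_mul_of_nonneg_right hpref (Real.exp_pos _).le
    _ = Real.exp (-a ^ 2 / (2 * v)) := one_mul _
  calc gaussianReal 0 v {x | a < |x|}
      ≤ gaussianReal 0 v (Ioi a) + gaussianReal 0 v (Iio (-a)) := by
        rw [hset]; exact measure_union_le _ _
  _ = gaussianReal 0 v (Ioi a) + gaussianReal 0 v (Ioi a) := by rw [hsym]
  _ ≤ ENNReal.ofReal (Real.exp (-a ^ 2 / (2 * v))) + ENNReal.ofReal (Real.exp (-a ^ 2 / (2 * v))) :=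
        add_le_add hone hone
  _ = ENNReal.ofReal (2 * Real.exp (-a ^ 2 / (2 * v))) := by
        rw [← ENNReal.ofReal_add (Real.exp_pos _).le (Real.exp_pos _).le]
        congr 1
        ring

noncomputable def kk (T : ℝ) (n : ℕ) (x : ℝ) : ℕ := ⌊x * 2^n / T⌋₊

noncomputable def dy (T : ℝ) (n : ℕ) (x : ℝ) : ℝ := (kk T n x : ℝ) * (T / 2^n)

lemma dy_nonneg {T : ℝ} (hT : 0 < T) (n : ℕ) (x : ℝ) : 0 ≤ dy T n x := by
  unfold dy
  positivity

lemma dy_le {T : ℝ} (hT : 0 < T) (n : ℕ) {x : ℝ} (hx : 0 ≤ x) : dy T n x ≤ x := by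
  unfold dy kk
  have h1 : (⌊x * 2^n / T⌋₊ : ℝ) ≤ x * 2^n / T := Nat.floor_le (by positivity)
  calc (⌊x * 2^n / T⌋₊ : ℝ) * (T / 2^n) ≤ (x * 2^n / T) * (T / 2^n) :=
        mul_le_mul_of_nonneg_right h1 (by positivity)
  _ = x := by field_simp
  
lemma lt_dy_add {T : ℝ} (hT : 0 < T) (n : ℕ) (x : ℝ) : x < dy T n x + T / 2^n := by
  unfold dy kk
  have h1 : x * 2^n / T < (⌊x * 2^n / T⌋₊ : ℝ) + 1 := Nat.lt_floor_add_one _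
  have h2 : (x * 2^n / T) * (T / 2^n) < ((⌊x * 2^n / T⌋₊ : ℝ) + 1) * (T / 2^n) :=
    mul_lt_mul_of_pos_right h1 (by positivity)
  calc x = (x * 2^n / T) * (T / 2^n) := by field_simp
  _ < ((⌊x * 2^n / T⌋₊ : ℝ) + 1) * (T / 2^n) := h2
  _ = (⌊x * 2^n / T⌋₊ : ℝ) * (T / 2^n) + T / 2^n := by ring

lemma kk_le {T : ℝ} (hT : 0 < T) (n : ℕ) {x : ℝ} (hx : x ≤ T) : kk T n x ≤ 2^n := by
  unfold kk
  have h1 : x * 2^n / T ≤ ((2^n : ℕ) : ℝ) := by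
    push_cast
    rw [div_le_iff₀ hT]
    calc x * 2^n ≤ T * 2^n := mul_le_mul_of_nonneg_right hx (by positivity)
    _ = 2^n * T := by ring
  calc ⌊x * 2^n / T⌋₊ ≤ ⌊((2^n : ℕ) : ℝ)⌋₊ := Nat.floor_mono h1
  _ = 2^n := Nat.floor_natCast _

lemma kk_succ {T : ℝ} (hT : 0 < T) (n : ℕ) {x : ℝ} (hx : 0 ≤ x) :
    kk T (n+1) x = 2 * kk T n x ∨ kk T (n+1) x = 2 * kk T n x + 1 := by
  unfold kk
  set y := x * 2^n / T with hy
  have hy0 : 0 ≤ y := by positivity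
  have hkey : x * 2^(n+1) / T = 2 * y := by
    rw [hy, pow_succ]
    ring
  rw [hkey]
  have h1 : 2 * ⌊y⌋₊ ≤ ⌊2 * y⌋₊ := by
    apply Nat.le_floor
    push_cast
    have := Nat.floor_le hy0
    linarith
  have h2 : ⌊2 * y⌋₊ < 2 * ⌊y⌋₊ + 2 := by
    rw [Nat.floor_lt (by positivity)]
    push_cast
    have := Nat.lt_floor_add_one y
    linarith
  omega

lemma kk_mono {T : ℝ} (hT : 0 < T) (n : ℕ) {s t : ℝ} (hst : s ≤ t) : kk T n s ≤ kk T n t := by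
  unfold kk
  apply Nat.floor_mono
  gcongr
  
lemma kk_gap {T : ℝ} (hT : 0 < T) (n : ℕ) {s t : ℝ} (hs : 0 ≤ s) (hst : s ≤ t)
    (h : t - s ≤ T / 2^n) : kk T n t ≤ kk T n s + 1 := by
  have ht0 : 0 ≤ t := hs.trans hst
  have h2 : kk T n t < kk T n s + 2 := by
    unfold kk
    rw [Nat.floor_lt (div_nonneg (mul_nonneg ht0 (by positivity)) hT.le)]
    push_cast
    have h3 : (t - s) * 2^n / T ≤ 1 := by
      rw [div_le_one hT]
      calc (t - s) * 2^n ≤ (T / 2^n) * 2^n := mul_le_mul_of_nonneg_right h (by positivity)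
      _ = T := by field_simp
    have h4 := Nat.lt_floor_add_one (s * 2^n / T)
    have h5 : t * 2^n / T = s * 2^n / T + (t - s) * 2^n / T := by ring
    linarith
  omega

lemma dy_mem_Icc {T : ℝ} (hT : 0 < T) (n : ℕ) {x : ℝ} (hx : x ∈ Icc 0 T) :
    dy T n x ∈ Icc 0 T :=
  ⟨dy_nonneg hT n x, (dy_le hT n hx.1).trans hx.2⟩

lemma tendsto_dy {T : ℝ} (hT : 0 < T) {x : ℝ} (hx : 0 ≤ x) :
    Filter.Tendsto (fun n => dy T n x) Filter.atTop (nhds x) := by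
  have hlow : Filter.Tendsto (fun n : ℕ => x - T / 2^n) Filter.atTop (nhds x) := by
    have h2 : Filter.Tendsto (fun n : ℕ => T / 2^n) Filter.atTop (nhds 0) := by
      have := tendsto_pow_atTop_nhds_zero_of_lt_one (by norm_num : (0:ℝ) ≤ 1/2)
        (by norm_num : (1/2:ℝ) < 1)
      have h3 := this.const_mul T
      rw [mul_zero] at h3
      convert h3 using 2 with n
      rw [div_pow, one_pow, mul_one_div]
    have := (tendsto_const_nhds (x := x) (f := (Filter.atTop : Filter ℕ))).sub h2
    rw [sub_zero] at this
    exact this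
  apply tendsto_of_tendsto_of_tendsto_of_le_of_le hlow tendsto_const_nhds
  · intro n
    have := lt_dy_add hT n x
    linarith
  · intro n
    exact dy_le hT n hx

section Chaining

variable {f : ℝ → ℝ} {T c δ : ℝ}

lemma level_step (hT : 0 < T) (hδ0 : 0 < δ) (hc : 0 ≤ c)
    (hdy : ∀ n : ℕ, ∀ k : ℕ, k < 2^n →
      |f (((k:ℝ)+1) * (T/2^n)) - f ((k:ℝ) * (T/2^n))| ≤ c * (T/2^n)^δ)
    {x : ℝ} (hx : x ∈ Icc 0 T) (m : ℕ) :
    |f (dy T (m+1) x) - f (dy T m x)| ≤ c * (T/2^(m+1))^δ := by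
  rcases kk_succ hT m hx.1 with h | h
  · have : dy T (m+1) x = dy T m x := by
      unfold dy
      rw [h]
      push_cast
      rw [pow_succ]
      ring
    rw [this, sub_self, abs_zero]
    positivity
  · have hk : 2 * kk T m x < 2^(m+1) := by
      have h1 : kk T (m+1) x ≤ 2^(m+1) := kk_le hT (m+1) hx.2
      omega
    have h2 := hdy (m+1) (2 * kk T m x) hk
    have e1 : dy T (m+1) x = (((2 * kk T m x : ℕ) : ℝ) + 1) * (T / 2^(m+1)) := by
      unfold dy
      rw [h]
      push_cast
      ring
    have e2 : dy T m x = ((2 * kk T m x : ℕ) : ℝ) * (T / 2^(m+1)) := by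
      unfold dy
      push_cast
      rw [pow_succ]
      ring
    rw [e1, e2]
    exact h2

lemma tail_est (hT : 0 < T) (hδ0 : 0 < δ) (hc : 0 ≤ c)
    (hf : ContinuousOn f (Icc 0 T))
    (hdy : ∀ n : ℕ, ∀ k : ℕ, k < 2^n →
      |f (((k:ℝ)+1) * (T/2^n)) - f ((k:ℝ) * (T/2^n))| ≤ c * (T/2^n)^δ)
    {x : ℝ} (hx : x ∈ Icc 0 T) (n : ℕ) :
    |f x - f (dy T n x)| ≤ c * (T/2^n)^δ * ((1/2:ℝ)^δ / (1 - (1/2:ℝ)^δ)) := by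
  set r : ℝ := (1/2:ℝ)^δ with hr
  have hr0 : 0 < r := Real.rpow_pos_of_pos (by norm_num) _
  have hr1 : r < 1 := Real.rpow_lt_one (by norm_num) (by norm_num) hδ0
  -- each level term
  have hterm : ∀ j : ℕ, c * (T/2^(n+j+1))^δ = c * (T/2^n)^δ * r^(j+1) := by
    intro j
    have hbase : T/2^(n+j+1) = (T/2^n) * (1/2:ℝ)^(j+1) := by
      rw [pow_add]
      field_simp
      rw [← pow_succ, show n + j + 1 = n + (j + 1) by ring, pow_add, mul_assoc, ← mul_pow]
      norm_num
    rw [hbase, Real.mul_rpow (by positivity) (by positivity)]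
    have hpow : ((1/2:ℝ)^(j+1) : ℝ)^δ = r^(j+1) := by
      rw [← Real.rpow_natCast (1/2:ℝ) (j+1), ← Real.rpow_mul (by norm_num), mul_comm,
        Real.rpow_mul (by norm_num), Real.rpow_natCast]
    rw [hpow]
    ring
  -- partial sums
  have hpartial : ∀ M : ℕ, |f (dy T (n+M) x) - f (dy T n x)|
      ≤ ∑ j ∈ Finset.range M, c * (T/2^(n+j+1))^δ := by
    intro M
    induction M with
    | zero => simp
    | succ M ih =>
      rw [Finset.sum_range_succ]
      calc |f (dy T (n+(M+1)) x) - f (dy T n x)|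
          ≤ |f (dy T (n+M+1) x) - f (dy T (n+M) x)| + |f (dy T (n+M) x) - f (dy T n x)| := by
            rw [show n+(M+1) = n+M+1 from rfl]
            exact abs_sub_le _ _ _
      _ ≤ c * (T/2^(n+M+1))^δ + ∑ j ∈ Finset.range M, c * (T/2^(n+j+1))^δ := by
            exact add_le_add (level_step hT hδ0 hc hdy hx (n+M)) ih
      _ = ∑ j ∈ Finset.range M, c * (T/2^(n+j+1))^δ + c * (T/2^(n+M+1))^δ := by ring
  -- geometric bound on the sum
  have hsum : ∀ M : ℕ, ∑ j ∈ Finset.range M, c * (T/2^(n+j+1))^δ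
      ≤ c * (T/2^n)^δ * (r / (1 - r)) := by
    intro M
    have h1 : ∑ j ∈ Finset.range M, c * (T/2^(n+j+1))^δ
        = (c * (T/2^n)^δ * r) * ∑ j ∈ Finset.range M, r^j := by
      rw [Finset.mul_sum]
      apply Finset.sum_congr rfl
      intro j _
      rw [hterm j, pow_succ]
      ring
    have h1r : (0:ℝ) < 1 - r := by linarith
    have h2 : ∑ j ∈ Finset.range M, r^j ≤ (1 - r)⁻¹ := by
      have e : (r^M - 1)/(r - 1) = (1 - r^M)/(1 - r) := by
        rw [div_eq_div_iff (sub_ne_zero.2 hr1.ne) h1r.ne']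
        ring
      rw [geom_sum_eq hr1.ne M, e, inv_eq_one_div, div_le_div_iff₀ h1r h1r]
      nlinarith [pow_nonneg hr0.le M, mul_nonneg (pow_nonneg hr0.le M) h1r.le]
    rw [h1]
    calc (c * (T/2^n)^δ * r) * ∑ j ∈ Finset.range M, r^j
        ≤ (c * (T/2^n)^δ * r) * (1 - r)⁻¹ :=
          mul_le_mul_of_nonneg_left h2 (by positivity)
    _ = c * (T/2^n)^δ * (r / (1 - r)) := by
        rw [div_eq_mul_inv]
        ring
  -- pass to the limit
  have hmem : ∀ M : ℕ, dy T M x ∈ Icc 0 T := fun M => dy_mem_Icc hT M hx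
  have htend : Filter.Tendsto (fun M => f (dy T M x)) Filter.atTop (nhds (f x)) := by
    apply (hf x hx).tendsto.comp
    rw [tendsto_nhdsWithin_iff]
    exact ⟨tendsto_dy hT hx.1, Filter.Eventually.of_forall hmem⟩
  have htend2 : Filter.Tendsto (fun M => |f (dy T M x) - f (dy T n x)|) Filter.atTop
      (nhds (|f x - f (dy T n x)|)) := by
    apply Filter.Tendsto.abs
    exact htend.sub tendsto_const_nhds
  apply le_of_tendsto htend2
  rw [Filter.eventually_atTop]
  refine ⟨n, fun M hM => ?_⟩
  have hMn : n + (M - n) = M := by omega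
  calc |f (dy T M x) - f (dy T n x)| = |f (dy T (n + (M-n)) x) - f (dy T n x)| := by rw [hMn]
  _ ≤ ∑ j ∈ Finset.range (M-n), c * (T/2^(n+j+1))^δ := hpartial (M-n)
  _ ≤ c * (T/2^n)^δ * (r / (1 - r)) := hsum (M-n)

end Chaining

lemma my_chaining {f : ℝ → ℝ} {T c δ : ℝ} (hT : 0 < T) (hδ0 : 0 < δ) (hc : 0 ≤ c)
    (hf : ContinuousOn f (Icc 0 T))
    (hdy : ∀ n : ℕ, ∀ k : ℕ, k < 2^n →
      |f (((k:ℝ)+1) * (T/2^n)) - f ((k:ℝ) * (T/2^n))| ≤ c * (T/2^n)^δ)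
    {s t : ℝ} (hs : s ∈ Icc 0 T) (ht : t ∈ Icc 0 T) (hst : s ≤ t) :
    |f t - f s| ≤ (2:ℝ)^δ * (1 + 2 * ((1/2:ℝ)^δ / (1 - (1/2:ℝ)^δ))) * c * (t - s)^δ := by
  set r : ℝ := (1/2:ℝ)^δ with hr
  have hr0 : 0 < r := Real.rpow_pos_of_pos (by norm_num) _
  have hr1 : r < 1 := Real.rpow_lt_one (by norm_num) (by norm_num) hδ0
  have hK : (0:ℝ) ≤ 1 + 2 * (r / (1 - r)) := by
    have : 0 ≤ r / (1 - r) := div_nonneg hr0.le (by linarith)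
    linarith
  rcases eq_or_lt_of_le hst with heq | hlt
  · rw [← heq, sub_self, sub_self, abs_zero, Real.zero_rpow hδ0.ne', mul_zero]
  have hu : 0 < t - s := by linarith
  have huT : t - s ≤ T := by
    have := ht.2; have := hs.1; linarith
  -- choose the level n
  have hex : ∃ n : ℕ, T / 2^(n+1) < t - s := by
    obtain ⟨n, hn⟩ := pow_unbounded_of_one_lt (T / (t - s)) (one_lt_two (α := ℝ))
    refine ⟨n, ?_⟩
    rw [div_lt_iff₀ (by positivity)] at hn ⊢
    calc T < 2^n * (t - s) := hn
    _ ≤ 2^(n+1) * (t - s) := by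
        apply mul_le_mul_of_nonneg_right _ hu.le
        apply pow_le_pow_right₀ one_le_two (Nat.le_succ n)
    _ = (t - s) * 2^(n+1) := mul_comm _ _
  set n := Nat.find hex with hn
  have hn1 : T / 2^(n+1) < t - s := Nat.find_spec hex
  have hn2 : t - s ≤ T / 2^n := by
    match hmn : n, hn with
    | 0, _ => simpa using huT
    | (m+1), hnm =>
      have := Nat.find_min hex (show m < Nat.find hex by omega)
      exact not_lt.1 this
  -- three pieces
  have htail_t := tail_est hT hδ0 hc hf hdy ht n
  have htail_s := tail_est hT hδ0 hc hf hdy hs n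
  have hmid : |f (dy T n t) - f (dy T n s)| ≤ c * (T/2^n)^δ := by
    have hgap : kk T n t ≤ kk T n s + 1 := kk_gap hT n hs.1 hst hn2
    have hmono : kk T n s ≤ kk T n t := kk_mono hT n hst
    rcases Nat.eq_or_lt_of_le hmono with he | hlt2
    · have : dy T n t = dy T n s := by unfold dy; rw [he]
      rw [this, sub_self, abs_zero]
      positivity
    · have he : kk T n t = kk T n s + 1 := by omega
      have hks : kk T n s < 2^n := by
        have := kk_le hT n ht.2
        omega
      have h2 := hdy n (kk T n s) hks
      have e1 : dy T n t = ((kk T n s : ℝ) + 1) * (T/2^n) := by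
        unfold dy
        rw [he]
        push_cast
        ring
      have e2 : dy T n s = (kk T n s : ℝ) * (T/2^n) := rfl
      rw [e1, e2]
      exact h2
  have hmain : |f t - f s| ≤ c * (T/2^n)^δ * (1 + 2 * (r / (1 - r))) := by
    calc |f t - f s|
        ≤ |f t - f (dy T n t)| + |f (dy T n t) - f s| := abs_sub_le _ _ _
    _ ≤ |f t - f (dy T n t)| + (|f (dy T n t) - f (dy T n s)| + |f (dy T n s) - f s|) := by
        have := abs_sub_le (f (dy T n t)) (f (dy T n s)) (f s)
        linarith
    _ ≤ c * (T/2^n)^δ * (r / (1 - r)) + (c * (T/2^n)^δ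
          + c * (T/2^n)^δ * (r / (1 - r))) := by
        rw [abs_sub_comm (f (dy T n s)) (f s)]
        exact add_le_add htail_t (add_le_add hmid htail_s)
    _ = c * (T/2^n)^δ * (1 + 2 * (r / (1 - r))) := by ring
  have hpow : (T/2^n : ℝ)^δ ≤ (2:ℝ)^δ * (t-s)^δ := by
    have hb : T/2^n ≤ 2 * (t - s) := by
      have : T/2^n = 2 * (T/2^(n+1)) := by
        rw [pow_succ]
        field_simp
      rw [this]
      linarith
    calc (T/2^n : ℝ)^δ ≤ (2 * (t-s))^δ := Real.rpow_le_rpow (by positivity) hb hδ0.le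
    _ = (2:ℝ)^δ * (t-s)^δ := Real.mul_rpow (by norm_num) hu.le
  calc |f t - f s| ≤ c * (T/2^n)^δ * (1 + 2 * (r / (1 - r))) := hmain
  _ ≤ c * ((2:ℝ)^δ * (t-s)^δ) * (1 + 2 * (r / (1 - r))) := by
      apply mul_le_mul_of_nonneg_right _ hK
      exact mul_le_mul_of_nonneg_left hpow hc
  _ = (2:ℝ)^δ * (1 + 2 * (r / (1 - r))) * c * (t - s)^δ := by ring


/-- Fernique-type estimate for the Hölder seminorm of Brownian motion: for a standard
one-dimensional Brownian motion `W` (continuous paths, `W 0 = 0`, independent increments,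
Gaussian increments with variance `t − s`), for every `δ ∈ (0,1/2)` and `T > 0` there exist
`c₁, c₂ > 0` (depending only on `δ, T`) such that for all `N > 0`,
`P(∃ s,t ∈ [0,T], |W_t − W_s| > N|t−s|^δ) ≤ c₁ e^{−c₂ N²}`. -/
theorem brownian_holder_tail_bound
    {Ω : Type*} [MeasurableSpace Ω] (P : Measure Ω) [IsProbabilityMeasure P]
    (W : ℝ → Ω → ℝ)
    (hmeas : ∀ t : ℝ, Measurable (W t))
    (hcont : ∀ ω : Ω, ContinuousOn (fun t => W t ω) (Set.Ici (0:ℝ)))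
    (hW0 : ∀ ω : Ω, W 0 ω = 0)
    (hincr : ∀ s t : ℝ, 0 ≤ s → s ≤ t →
      P.map (fun ω => W t ω - W s ω) = ProbabilityTheory.gaussianReal 0 (t - s).toNNReal)
    (hindep : ∀ (m : ℕ) (t : ℕ → ℝ), Monotone t → 0 ≤ t 0 →
      ProbabilityTheory.iIndepFun
        (fun (i : Fin m) (ω : Ω) => W (t ((i : ℕ) + 1)) ω - W (t (i : ℕ)) ω) P)
    (δ T : ℝ) (hδ : δ ∈ Set.Ioo (0:ℝ) (1/2)) (hT : 0 < T) :
    ∃ c₁ > (0:ℝ), ∃ c₂ > (0:ℝ), ∀ N : ℝ, 0 < N →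
      (P {ω | ∃ s ∈ Set.Icc (0:ℝ) T, ∃ t ∈ Set.Icc (0:ℝ) T,
          N * |t - s| ^ δ < |W t ω - W s ω|}).toReal
        ≤ c₁ * Real.exp (-c₂ * N ^ 2) := by
  obtain ⟨hδ0, hδh⟩ := hδ
  set r : ℝ := (1/2:ℝ)^δ with hrdef
  have hr0 : 0 < r := Real.rpow_pos_of_pos (by norm_num) _
  have hr1 : r < 1 := Real.rpow_lt_one (by norm_num) (by norm_num) hδ0
  set C₀ : ℝ := (2:ℝ)^δ * (1 + 2 * ((1/2:ℝ)^δ / (1 - (1/2:ℝ)^δ))) with hC₀def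
  have hC₀ : 0 < C₀ := by
    apply mul_pos (Real.rpow_pos_of_pos (by norm_num) _)
    have : 0 ≤ r / (1 - r) := div_nonneg hr0.le (by linarith)
    rw [← hrdef]
    linarith
  set ε : ℝ := 1 - 2*δ with hεdef
  have hε : 0 < ε := by rw [hεdef]; linarith
  set B : ℝ := (2:ℝ)^ε with hBdef
  have hB1 : 1 < B := Real.one_lt_rpow_iff_of_pos (by norm_num) |>.2 (Or.inl (by norm_num [hε]))
  have hB0 : 0 < B := by linarith
  set κ : ℝ := T^(-ε) / (2*C₀^2) with hκdef
  have hκ : 0 < κ := div_pos (Real.rpow_pos_of_pos hT _) (by positivity)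
  set Q : ℝ := max ((2*Real.log 2)/(κ*(B-1))) ((C₀ * T^(1/2-δ))^2) with hQdef
  refine ⟨max 8 (Real.exp (κ * Q)), lt_of_lt_of_le (by norm_num) (le_max_left _ _), κ, hκ, ?_⟩
  intro N hN
  set E : Set Ω := {ω | ∃ s ∈ Set.Icc (0:ℝ) T, ∃ t ∈ Set.Icc (0:ℝ) T,
      N * |t - s| ^ δ < |W t ω - W s ω|} with hEdef
  by_cases hbig : 2*Real.log 2 ≤ κ*N^2*(B-1) ∧ C₀ * T^(1/2-δ) ≤ N
  · obtain ⟨hbig1, hbig2⟩ := hbig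
    -- bad events
    set A : ℕ → ℕ → Set Ω := fun n k =>
      {ω | (N/C₀) * (T/2^n)^δ < |W (((k:ℝ)+1) * (T/2^n)) ω - W ((k:ℝ) * (T/2^n)) ω|} with hAdef
    -- inclusion
    have hincl : E ⊆ ⋃ n : ℕ, ⋃ k ∈ Finset.range (2^n), A n k := by
      intro ω hω
      obtain ⟨s, hs, t, ht, hlt⟩ := hω
      by_contra hnot
      simp only [mem_iUnion, Finset.mem_range, not_exists] at hnot
      have hdy : ∀ n : ℕ, ∀ k : ℕ, k < 2^n →
          |W (((k:ℝ)+1) * (T/2^n)) ω - W ((k:ℝ) * (T/2^n)) ω| ≤ (N/C₀) * (T/2^n)^δ := by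
        intro n k hk
        by_contra hgt
        exact hnot n k hk (lt_of_not_ge hgt)
      have hfc : ContinuousOn (fun u => W u ω) (Icc 0 T) :=
        (hcont ω).mono (Icc_subset_Ici_self)
      have hNC : 0 ≤ N / C₀ := div_nonneg hN.le hC₀.le
      have key : ∀ u v : ℝ, u ∈ Icc (0:ℝ) T → v ∈ Icc (0:ℝ) T → u ≤ v →
          |W v ω - W u ω| ≤ N * (v - u)^δ := by
        intro u v hu hv huv
        have := my_chaining hT hδ0 hNC hfc hdy hu hv huv
        calc |W v ω - W u ω| ≤ C₀ * (N/C₀) * (v-u)^δ := this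
        _ = N * (v-u)^δ := by field_simp
      rcases le_total s t with h | h
      · have := key s t hs ht h
        rw [abs_of_nonneg (by linarith : (0:ℝ) ≤ t - s)] at hlt
        linarith
      · have := key t s ht hs h
        rw [abs_sub_comm t s, abs_of_nonneg (by linarith : (0:ℝ) ≤ s - t),
          abs_sub_comm (W t ω) (W s ω)] at hlt
        linarith
    -- single event bound
    have hA : ∀ n k : ℕ, k < 2^n →
        P (A n k) ≤ ENNReal.ofReal (2 * Real.exp (-(κ*N^2*B^n))) := by
      intro n k hk
      set x : ℝ := T/2^n with hxdef
      have hx : 0 < x := by rw [hxdef]; positivity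
      set s' : ℝ := (k:ℝ) * x with hs'def
      set t' : ℝ := ((k:ℝ)+1) * x with ht'def
      have hs'0 : 0 ≤ s' := by rw [hs'def]; positivity
      have hst' : s' ≤ t' := by
        rw [hs'def, ht'def]
        nlinarith
      have hts : t' - s' = x := by rw [hs'def, ht'def]; ring
      have hmap := hincr s' t' hs'0 hst'
      rw [hts] at hmap
      set a : ℝ := (N/C₀) * x^δ with hadef
      have ha0 : 0 < a := by
        apply mul_pos (div_pos hN hC₀) (Real.rpow_pos_of_pos hx _)
      have hAeq : A n k = (fun ω => W t' ω - W s' ω) ⁻¹' {y : ℝ | a < |y|} := rfl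
      have hmeasset : MeasurableSet {y : ℝ | a < |y|} :=
        measurableSet_lt measurable_const measurable_abs
      rw [hAeq, ← Measure.map_apply (f := fun ω => W t' ω - W s' ω) ((hmeas t').sub (hmeas s')) hmeasset, hmap]
      have hvx : ((x.toNNReal : ℝ≥0) : ℝ) = x := Real.coe_toNNReal _ hx.le
      have hvpos : 0 < ((x.toNNReal : ℝ≥0) : ℝ) := by rw [hvx]; exact hx
      have hsqrt : Real.sqrt (x.toNNReal : ℝ) ≤ a := by
        rw [hvx, hadef]
        have e1 : Real.sqrt x = x^(1/2 : ℝ) := Real.sqrt_eq_rpow x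
        rw [e1, show (1/2 : ℝ) = (1/2 - δ) + δ by ring, Real.rpow_add hx]
        apply mul_le_mul_of_nonneg_right _ (Real.rpow_pos_of_pos hx _).le
        have e2 : x^(1/2-δ : ℝ) ≤ T^(1/2-δ : ℝ) := by
          apply Real.rpow_le_rpow hx.le _ (by linarith)
          rw [hxdef]
          calc T/2^n ≤ T/1 := by
                apply div_le_div_of_nonneg_left hT.le (by norm_num) (one_le_pow₀ one_le_two)
          _ = T := div_one T
        calc x^(1/2-δ : ℝ) ≤ T^(1/2-δ : ℝ) := e2
        _ ≤ N/C₀ := by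
            rw [le_div_iff₀ hC₀]
            linarith [hbig2]
      have htail := my_gauss_tail hvpos ha0 hsqrt
      have hBn : x^(-(ε:ℝ)) = T^(-(ε:ℝ)) * B^n := by
        have hA2 : B^n = (2:ℝ)^((ε*(n:ℕ) : ℝ)) := by
          rw [hBdef, ← Real.rpow_natCast ((2:ℝ)^ε) n, ← Real.rpow_mul (by norm_num)]
        have hA1 : ((2:ℝ)^(n:ℕ))^(-(ε:ℝ)) = ((2:ℝ)^((ε*(n:ℕ):ℝ)))⁻¹ := by
          rw [← Real.rpow_natCast (2:ℝ) n, ← Real.rpow_mul (by norm_num : (0:ℝ) ≤ 2),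
            ← Real.rpow_neg (by norm_num : (0:ℝ) ≤ 2)]
          congr 1
          ring
        rw [hxdef, Real.div_rpow hT.le (by positivity), hA1, hA2]
        field_simp
      have hxx : (x^(δ:ℝ))^2 = x^(2*δ : ℝ) := by
        rw [← Real.rpow_natCast (x^(δ:ℝ)) 2, ← Real.rpow_mul hx.le]
        norm_num
        rw [mul_comm]
      have hexp : -a^2/(2*x) = -(κ*N^2*B^n) := by
        rw [hadef, mul_pow, hxx, show (2*δ:ℝ) = -ε + 1 by rw [hεdef]; ring,
          Real.rpow_add hx, Real.rpow_one, hBn, hκdef]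
        field_simp
      refine htail.trans (le_of_eq ?_)
      rw [hvx, hexp]
    -- sum over k at a fixed level
    have hsumk : ∀ n : ℕ, ∑ k ∈ Finset.range (2^n), P (A n k)
        ≤ ENNReal.ofReal (4 * Real.exp (-(κ*N^2)) * (1/2:ℝ)^n) := by
      intro n
      have h1 : ∑ k ∈ Finset.range (2^n), P (A n k)
          ≤ ∑ _k ∈ Finset.range (2^n), ENNReal.ofReal (2 * Real.exp (-(κ*N^2*B^n))) := by
        apply Finset.sum_le_sum
        intro k hk
        exact hA n k (Finset.mem_range.1 hk)
      rw [Finset.sum_const, Finset.card_range] at h1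
      refine h1.trans ?_
      rw [nsmul_eq_mul, ← ENNReal.ofReal_natCast (2^n), ← ENNReal.ofReal_mul (by positivity)]
      apply ENNReal.ofReal_le_ofReal
      push_cast
      -- real estimate
      have hBer : 1 + (n:ℝ)*(B-1) ≤ B^n := by
        have h := one_add_mul_le_pow (by linarith : (-2:ℝ) ≤ B - 1) n
        have e : (1 + (B-1)) = B := by ring
        rw [e] at h
        exact h
      have hq : Real.exp (-(2*Real.log 2)) = (1/4:ℝ) := by
        rw [show (2:ℝ)*Real.log 2 = Real.log 4 by
            rw [show (4:ℝ) = 2^(2:ℕ) by norm_num, Real.log_pow]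
            push_cast
            ring,
          Real.exp_neg, Real.exp_log (by norm_num)]
        norm_num
      have hexp14 : Real.exp (-((n:ℝ)*(2*Real.log 2))) = (1/4:ℝ)^n := by
        rw [show -((n:ℝ)*(2*Real.log 2)) = (n:ℝ) * (-(2*Real.log 2)) by ring,
          Real.exp_nat_mul, hq]
      have hexp1 : Real.exp (-(κ*N^2*B^n)) ≤ Real.exp (-(κ*N^2)) * (1/4:ℝ)^n := by
        have h3 : κ*N^2*(1 + (n:ℝ)*(B-1)) ≤ κ*N^2*B^n :=
          mul_le_mul_of_nonneg_left hBer (by positivity)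
        have h4 : (n:ℝ)*(2*Real.log 2) ≤ (n:ℝ)*(κ*N^2*(B-1)) :=
          mul_le_mul_of_nonneg_left hbig1 (Nat.cast_nonneg n)
        have h5 : κ*N^2*(1+(n:ℝ)*(B-1)) = κ*N^2 + (n:ℝ)*(κ*N^2*(B-1)) := by ring
        calc Real.exp (-(κ*N^2*B^n)) ≤ Real.exp (-(κ*N^2 + (n:ℝ)*(2*Real.log 2))) := by
              apply Real.exp_le_exp.2
              linarith
        _ = Real.exp (-(κ*N^2)) * Real.exp (-((n:ℝ)*(2*Real.log 2))) := by
              rw [← Real.exp_add]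
              congr 1
              ring
        _ = Real.exp (-(κ*N^2)) * (1/4:ℝ)^n := by rw [hexp14]
      calc (2:ℝ)^n * (2 * Real.exp (-(κ*N^2*B^n)))
          ≤ (2:ℝ)^n * (2 * (Real.exp (-(κ*N^2)) * (1/4:ℝ)^n)) := by
            apply mul_le_mul_of_nonneg_left _ (by positivity)
            apply mul_le_mul_of_nonneg_left hexp1 (by norm_num)
      _ = 2 * Real.exp (-(κ*N^2)) * ((2:ℝ)^n * (1/4:ℝ)^n) := by ring
      _ = 2 * Real.exp (-(κ*N^2)) * (1/2:ℝ)^n := by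
            rw [← mul_pow]
            norm_num
      _ ≤ 4 * Real.exp (-(κ*N^2)) * (1/2:ℝ)^n := by
            have : (0:ℝ) ≤ (1/2:ℝ)^n := by positivity
            nlinarith [Real.exp_pos (-(κ*N^2))]
    -- total bound
    have htsum : P E ≤ ENNReal.ofReal (8 * Real.exp (-(κ*N^2))) := by
      calc P E ≤ P (⋃ n : ℕ, ⋃ k ∈ Finset.range (2^n), A n k) := measure_mono hincl
      _ ≤ ∑' n : ℕ, P (⋃ k ∈ Finset.range (2^n), A n k) := measure_iUnion_le _
      _ ≤ ∑' n : ℕ, ∑ k ∈ Finset.range (2^n), P (A n k) :=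
          ENNReal.tsum_le_tsum (fun n => measure_biUnion_finset_le _ _)
      _ ≤ ∑' n : ℕ, ENNReal.ofReal (4 * Real.exp (-(κ*N^2)) * (1/2:ℝ)^n) :=
          ENNReal.tsum_le_tsum hsumk
      _ = ENNReal.ofReal (∑' n : ℕ, 4 * Real.exp (-(κ*N^2)) * (1/2:ℝ)^n) := by
          rw [ENNReal.ofReal_tsum_of_nonneg (fun n => by positivity)]
          exact Summable.mul_left _ (summable_geometric_of_lt_one (by norm_num) (by norm_num))
      _ = ENNReal.ofReal (8 * Real.exp (-(κ*N^2))) := by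
          congr 1
          rw [tsum_mul_left, tsum_geometric_of_lt_one (by norm_num) (by norm_num)]
          norm_num
          ring
    calc (P E).toReal ≤ (ENNReal.ofReal (8 * Real.exp (-(κ*N^2)))).toReal :=
        ENNReal.toReal_mono ENNReal.ofReal_ne_top htsum
    _ = 8 * Real.exp (-(κ*N^2)) := ENNReal.toReal_ofReal (by positivity)
    _ ≤ max 8 (Real.exp (κ*Q)) * Real.exp (-κ * N^2) := by
        rw [neg_mul]
        apply mul_le_mul_of_nonneg_right (le_max_left _ _) (Real.exp_pos _).le
  · -- small N case
    rw [not_and_or] at hbig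
    push_neg at hbig
    have hQN : N^2 ≤ Q := by
      rcases hbig with h | h
      · have hpos : 0 < κ*(B-1) := by
          apply mul_pos hκ
          linarith
        have : N^2 ≤ (2*Real.log 2)/(κ*(B-1)) := by
          rw [le_div_iff₀ hpos]
          nlinarith
        exact this.trans (le_max_left _ _)
      · have : N^2 ≤ (C₀ * T^(1/2-δ))^2 := by
          have hNle : N ≤ C₀ * T^(1/2-δ) := h.le
          nlinarith
        exact this.trans (le_max_right _ _)
    have h1 : (P E).toReal ≤ 1 := by
      calc (P E).toReal ≤ (1:ℝ≥0∞).toReal :=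
          ENNReal.toReal_mono ENNReal.one_ne_top prob_le_one
      _ = 1 := ENNReal.toReal_one
    calc (P E).toReal ≤ 1 := h1
    _ ≤ Real.exp (κ*Q) * Real.exp (-κ*N^2) := by
        have h0 : (0:ℝ) ≤ κ*Q + -κ*N^2 := by nlinarith
        calc (1:ℝ) = Real.exp 0 := Real.exp_zero.symm
        _ ≤ Real.exp (κ*Q + -κ*N^2) := Real.exp_le_exp.2 h0
        _ = Real.exp (κ*Q) * Real.exp (-κ*N^2) := Real.exp_add _ _
    _ ≤ max 8 (Real.exp (κ*Q)) * Real.exp (-κ * N^2) := by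
        apply mul_le_mul_of_nonneg_right (le_max_right _ _) (Real.exp_pos _).le
end
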